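/- arXiv:2207.07470 — 2 statements merged into one kernel-verified Lean document; each statement's English description precedes it below -/
import Mathlib

section
/- (Local constancy of the critical cone under nondegeneracy.) Let g : ℝᵐ → ℝ ∪ {∞} be a polyhedral function and (z̄, λ̄) ∈ gph ∂g with λ̄ ∈ ri ∂g(z̄). Then there exists r > 0 such that for all (z, λ) ∈ (gph ∂g) ∩ B_r(z̄, λ̄) one has λ ∈ ri ∂g(z) and K_g(z, λ) = K_g(z̄, λ̄). -/
open Filter Topology Set Metric

noncomputable section

/-- A polyhedral convex set: a finite intersection of closed half-spaces. -/
def IsPolyhedralSet {E : Type*} [AddCommGroup E] [Module ℝ E] (C : Set E) : Prop :=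
  ∃ (s : ℕ) (b : Fin s → (E →ₗ[ℝ] ℝ)) (β : Fin s → ℝ), C = {x | ∀ i, b i x ≤ β i}

/-- A polyhedral function: proper (never `⊥`, somewhere finite) with polyhedral epigraph. -/
def IsPolyhedralFn {E : Type*} [AddCommGroup E] [Module ℝ E] (g : E → EReal) : Prop :=
  (∃ z, g z ≠ ⊤) ∧ (∀ z, g z ≠ ⊥) ∧
    IsPolyhedralSet {p : E × ℝ | g p.1 ≤ (p.2 : EReal)}

/-- Tangent cone to a convex set: closure of the cone of feasible directions. -/
def tcone {E : Type*} [NormedAddCommGroup E] [NormedSpace ℝ E] (C : Set E) (x : E) : Set E :=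
  closure {w | ∃ t : ℝ, 0 < t ∧ x + t • w ∈ C}

/-- Convex subdifferential of an extended-real-valued function. -/
def subdiff {E : Type*} [NormedAddCommGroup E] [InnerProductSpace ℝ E]
    (g : E → EReal) (z : E) : Set E :=
  {v | ∀ x, g z + ((inner ℝ v (x - z) : ℝ) : EReal) ≤ g x}

/-- Subderivative: `dg(z)(w) = liminf_{t↓0, w'→w} (g(z+tw')-g(z))/t`. -/
def subderiv {E : Type*} [NormedAddCommGroup E] [NormedSpace ℝ E]
    (g : E → EReal) (z : E) (w : E) : EReal :=
  Filter.liminf (fun p : ℝ × E => (g (z + p.1 • p.2) - g z) * (((p.1)⁻¹ : ℝ) : EReal))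
    ((nhdsWithin 0 (Set.Ioi (0 : ℝ))) ×ˢ 𝓝 w)

/-- Critical cone `K_g(z,v) = {w | dg(z)(w) = ⟨v,w⟩}`. -/
def Kcone {E : Type*} [NormedAddCommGroup E] [InnerProductSpace ℝ E]
    (g : E → EReal) (z v : E) : Set E :=
  {w | subderiv g z w = ((inner ℝ v w : ℝ) : EReal)}

/-- Normal cone of convex analysis. -/
def ncone {E : Type*} [NormedAddCommGroup E] [InnerProductSpace ℝ E]
    (C : Set E) (x : E) : Set E :=
  {v | ∀ y ∈ C, (inner ℝ v (y - x) : ℝ) ≤ 0}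

/-- A set is a linear subspace. -/
def IsLinSubspace {E : Type*} [AddCommGroup E] [Module ℝ E] (K : Set E) : Prop :=
  ∃ S : Submodule ℝ E, K = ↑S

/-- Polar cone. -/
def polarCone {E : Type*} [NormedAddCommGroup E] [InnerProductSpace ℝ E] (K : Set E) : Set E :=
  {u | ∀ w ∈ K, (inner ℝ u w : ℝ) ≤ 0}

/-- Fenchel conjugate. -/
def fconj {E : Type*} [NormedAddCommGroup E] [InnerProductSpace ℝ E]
    (g : E → EReal) (v : E) : EReal :=
  ⨆ z, ((inner ℝ v z : ℝ) : EReal) - g z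

/-- Bouligand (contingent) tangent cone, via sequences. -/
def btcone {E : Type*} [NormedAddCommGroup E] [NormedSpace ℝ E] (Ω : Set E) (x : E) : Set E :=
  {w | ∃ (t : ℕ → ℝ) (v : ℕ → E), (∀ n, 0 < t n) ∧ Tendsto t atTop (𝓝 0) ∧
      Tendsto v atTop (𝓝 w) ∧ ∀ n, x + t n • v n ∈ Ω}

/-- Clarke (regular) tangent cone, via sequences. -/
def clarkeT {E : Type*} [NormedAddCommGroup E] [NormedSpace ℝ E] (Ω : Set E) (xb : E) : Set E :=
  {w | ∀ (x : ℕ → E) (t : ℕ → ℝ), (∀ n, x n ∈ Ω) → Tendsto x atTop (𝓝 xb) →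
      (∀ n, 0 < t n) → Tendsto t atTop (𝓝 0) →
      ∃ v : ℕ → E, Tendsto v atTop (𝓝 w) ∧ ∀ n, x n + t n • v n ∈ Ω}

/-- Paratingent cone, via sequences. -/
def paraT {E : Type*} [NormedAddCommGroup E] [NormedSpace ℝ E] (Ω : Set E) (xb : E) : Set E :=
  {w | ∃ (x : ℕ → E) (t : ℕ → ℝ) (v : ℕ → E), (∀ n, x n ∈ Ω) ∧ Tendsto x atTop (𝓝 xb) ∧
      (∀ n, 0 < t n) ∧ Tendsto t atTop (𝓝 0) ∧ Tendsto v atTop (𝓝 w) ∧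
      ∀ n, x n + t n • v n ∈ Ω}

section Aux9

open RealInnerProductSpace

variable {m : ℕ}

local notation "E'" => EuclideanSpace ℝ (Fin m)

lemma aux_div {c V B α : ℝ} (hc : c < 0) : V + α * c ≤ B ↔ (-c)⁻¹ * V - B / (-c) ≤ α := by
  have hpos : (0:ℝ) < -c := by linarith
  rw [show (-c)⁻¹ * V - B / (-c) = (V - B)/(-c) by ring, div_le_iff₀ hpos]
  constructor <;> intro h <;> nlinarith

lemma exists_rep (g : E' → EReal) (hg : IsPolyhedralFn g) :
    ∃ (s : ℕ) (a c : Fin s → E') (r d : Fin s → ℝ) (IE IZ : Finset (Fin s)),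
      IE.Nonempty ∧
      ∀ x (α : ℝ), g x ≤ (α : EReal) ↔
        ((∀ i ∈ IE, ⟪a i, x⟫ - r i ≤ α) ∧ ∀ j ∈ IZ, ⟪c j, x⟫ ≤ d j) := by
  obtain ⟨⟨z0, hz0top⟩, hbot, s, b, β, hset⟩ := hg
  have hz0bot := hbot z0
  -- g z0 is a real number
  obtain ⟨α0, hα0⟩ : ∃ α0 : ℝ, g z0 = (α0 : EReal) :=
    ⟨(g z0).toReal, (EReal.coe_toReal hz0top hz0bot).symm⟩
  have hiff : ∀ (x : E') (α : ℝ), g x ≤ (α : EReal) ↔ ∀ i, b i (x, α) ≤ β i := by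
    intro x α
    have : (x, α) ∈ {p : E' × ℝ | g p.1 ≤ (p.2 : EReal)} ↔ (x, α) ∈ {p : E' × ℝ | ∀ i, b i p ≤ β i} := by
      rw [hset]
    simpa using this
  -- decompose b i (x, α) = b i (x,0) + α * c0 i
  set c0 : Fin s → ℝ := fun i => b i (0, 1) with hc0
  have hdecomp : ∀ i x (α : ℝ), b i (x, α) = b i (x, 0) + α * c0 i := by
    intro i x α
    have : (x, α) = (x, (0:ℝ)) + α • ((0:E'), (1:ℝ)) := by
      simp [Prod.ext_iff]
    rw [this, map_add, map_smul]
    simp [hc0, smul_eq_mul]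
  -- c0 i ≤ 0
  have hc0le : ∀ i, c0 i ≤ 0 := by
    intro i
    by_contra hpos
    push_neg at hpos
    -- for all large α, b i (z0, α) ≤ β i
    have hall : ∀ α : ℝ, α0 ≤ α → b i (z0, 0) + α * c0 i ≤ β i := by
      intro α hα
      have := (hiff z0 α).1 (by rw [hα0]; exact_mod_cast hα)
      rw [← hdecomp]; exact this i
    obtain ⟨α, hα1, hα2⟩ : ∃ α : ℝ, α0 ≤ α ∧ β i < b i (z0, 0) + α * c0 i := by
      refine ⟨max α0 ((β i - b i (z0,0) + 1)/ c0 i), le_max_left _ _, ?_⟩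
      have h1 : (β i - b i (z0,0) + 1)/ c0 i ≤ max α0 ((β i - b i (z0,0) + 1)/ c0 i) := le_max_right _ _
      have := mul_le_mul_of_nonneg_right h1 (le_of_lt hpos)
      rw [div_mul_cancel₀ _ (ne_of_gt hpos)] at this
      nlinarith
    exact absurd (hall α hα1) (not_le.2 hα2)
  -- vector representing x ↦ b i (x,0)
  set v : Fin s → E' := fun i =>
    (InnerProductSpace.toDual ℝ E').symm (LinearMap.toContinuousLinearMap ((b i).comp (LinearMap.inl ℝ E' ℝ))) with hv
  have hvx : ∀ i (x : E'), ⟪v i, x⟫ = b i (x, 0) := by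
    intro i x
    simp [hv, InnerProductSpace.toDual_symm_apply]
  classical
  set IE : Finset (Fin s) := Finset.univ.filter (fun i => c0 i < 0) with hIE
  set IZ : Finset (Fin s) := Finset.univ.filter (fun i => c0 i = 0) with hIZ
  refine ⟨s, fun i => (-(c0 i))⁻¹ • v i, v, fun i => β i / (-(c0 i)), β, IE, IZ, ?_, ?_⟩
  · -- IE nonempty
    by_contra hemp
    rw [Finset.not_nonempty_iff_eq_empty] at hemp
    have hz : ∀ i, c0 i = 0 := by
      intro i
      rcases lt_or_eq_of_le (hc0le i) with h | h
      · exfalso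
        have hmem : i ∈ IE := by rw [hIE]; exact Finset.mem_filter.2 ⟨Finset.mem_univ i, h⟩
        rw [hemp] at hmem
        simp at hmem
      · exact h
    -- then g z0 ≤ α for all α, so g z0 = ⊥
    have hble : ∀ α : ℝ, g z0 ≤ (α : EReal) := by
      intro α
      refine (hiff z0 α).2 (fun i => ?_)
      have h0 := (hiff z0 α0).1 (le_of_eq hα0)
      rw [hdecomp i z0 α, hz i, mul_zero, add_zero]
      have := h0 i
      rw [hdecomp i z0 α0, hz i, mul_zero, add_zero] at this
      exact this
    have : g z0 ≤ ((α0 - 1 : ℝ) : EReal) := hble _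
    rw [hα0] at this
    exact absurd (by exact_mod_cast this) (by linarith)
  · intro x α
    rw [hiff x α]
    constructor
    · rintro h
      constructor
      · intro i hi
        have hi' : c0 i < 0 := by rw [hIE] at hi; exact (Finset.mem_filter.1 hi).2
        have h1 := h i
        rw [hdecomp i x α, ← hvx i x] at h1
        simp only []
        rw [real_inner_smul_left]
        exact (aux_div hi').1 h1
      · intro j hj
        have hj' : c0 j = 0 := by rw [hIZ] at hj; exact (Finset.mem_filter.1 hj).2
        have := h j
        rw [hdecomp j x α, hj', mul_zero, add_zero] at this
        rwa [hvx j x]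
    · rintro ⟨hE, hZ⟩ i
      rcases lt_or_eq_of_le (hc0le i) with h | h
      · have hi : i ∈ IE := by rw [hIE]; exact Finset.mem_filter.2 ⟨Finset.mem_univ i, h⟩
        have h1 := hE i hi
        simp only [] at h1
        rw [real_inner_smul_left] at h1
        rw [hdecomp i x α, ← hvx i x]
        exact (aux_div h).2 h1
      · have hi : i ∈ IZ := by rw [hIZ]; exact Finset.mem_filter.2 ⟨Finset.mem_univ i, h⟩
        have := hZ i hi
        rw [hvx i x] at this
        rw [hdecomp i x α, ← h.symm]
        simpa using this

section Rep

variable {s : ℕ} {g : EuclideanSpace ℝ (Fin m) → EReal} {a c : Fin s → EuclideanSpace ℝ (Fin m)}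
  {r d : Fin s → ℝ} {IE IZ : Finset (Fin s)}

/-- the max of the affine pieces -/
def Mval (a : Fin s → EuclideanSpace ℝ (Fin m)) (r : Fin s → ℝ) (IE : Finset (Fin s))
    (hne : IE.Nonempty) (z : EuclideanSpace ℝ (Fin m)) : ℝ :=
  IE.sup' hne fun i => ⟪a i, z⟫ - r i

variable (hne : IE.Nonempty)
  (hrep : ∀ x (α : ℝ), g x ≤ (α : EReal) ↔
        ((∀ i ∈ IE, ⟪a i, x⟫ - r i ≤ α) ∧ ∀ j ∈ IZ, ⟪c j, x⟫ ≤ d j))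
  (hbot : ∀ z, g z ≠ ⊥)

include hne hrep hbot

lemma gval {z : EuclideanSpace ℝ (Fin m)} (hz : g z ≠ ⊤) :
    g z = ((Mval a r IE hne z : ℝ) : EReal) ∧ ∀ j ∈ IZ, ⟪c j, z⟫ ≤ d j := by
  set α0 := (g z).toReal with hα0def
  have hα0 : g z = (α0 : EReal) := (EReal.coe_toReal hz (hbot z)).symm
  obtain ⟨hE, hZ⟩ := (hrep z α0).1 (le_of_eq hα0)
  have h1 : Mval a r IE hne z ≤ α0 := Finset.sup'_le _ _ hE
  have h2 : g z ≤ ((Mval a r IE hne z : ℝ) : EReal) :=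
    (hrep z _).2 ⟨fun i hi => Finset.le_sup' (fun i => ⟪a i, z⟫ - r i) hi, hZ⟩
  refine ⟨le_antisymm h2 ?_, hZ⟩
  rw [hα0]
  exact_mod_cast h1

lemma gtop {x : EuclideanSpace ℝ (Fin m)} (hx : ¬ ∀ j ∈ IZ, ⟪c j, x⟫ ≤ d j) : g x = ⊤ := by
  by_contra h
  exact hx (gval hne hrep hbot h).2

end Rep

section Rep2

variable {s : ℕ} {g : EuclideanSpace ℝ (Fin m) → EReal} {a c : Fin s → EuclideanSpace ℝ (Fin m)}
  {r d : Fin s → ℝ} {IE IZ : Finset (Fin s)}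

lemma subdiff_ne_top {g : EuclideanSpace ℝ (Fin m) → EReal} {z v : EuclideanSpace ℝ (Fin m)}
    (hprop : ∃ z0, g z0 ≠ ⊤) (hbot : ∀ z, g z ≠ ⊥) (hv : v ∈ subdiff g z) : g z ≠ ⊤ := by
  obtain ⟨z0, hz0⟩ := hprop
  intro htop
  have := hv z0
  rw [htop] at this
  have h1 : (⊤ : EReal) + ((inner ℝ v (z0 - z) : ℝ) : EReal) = ⊤ := by
    rw [EReal.top_add_of_ne_bot]; exact EReal.coe_ne_bot _
  rw [h1, top_le_iff] at this
  exact hz0 this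

variable (hne : IE.Nonempty)
  (hrep : ∀ x (α : ℝ), g x ≤ (α : EReal) ↔
        ((∀ i ∈ IE, ⟪a i, x⟫ - r i ≤ α) ∧ ∀ j ∈ IZ, ⟪c j, x⟫ ≤ d j))
  (hbot : ∀ z, g z ≠ ⊥)

include hne hrep hbot

lemma a_mem_subdiff {z : EuclideanSpace ℝ (Fin m)} (hz : g z ≠ ⊤) {i : Fin s} (hi : i ∈ IE)
    (hact : ⟪a i, z⟫ - r i = Mval a r IE hne z) : a i ∈ subdiff g z := by
  intro x
  by_cases hx : g x = ⊤
  · rw [hx]; exact le_top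
  · rw [(gval hne hrep hbot hz).1, (gval hne hrep hbot hx).1]
    have h1 : ⟪a i, x⟫ - r i ≤ Mval a r IE hne x := Finset.le_sup' (fun i => ⟪a i, x⟫ - r i) hi
    have h2 : ⟪a i, x - z⟫ = ⟪a i, x⟫ - ⟪a i, z⟫ := inner_sub_right _ _ _
    have : Mval a r IE hne z + ⟪a i, x - z⟫ ≤ Mval a r IE hne x := by
      rw [h2, ← hact]; linarith
    exact_mod_cast this

lemma c_add_mem_subdiff {z v : EuclideanSpace ℝ (Fin m)} (hz : g z ≠ ⊤) {j : Fin s} (hj : j ∈ IZ)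
    (hact : ⟪c j, z⟫ = d j) (hv : v ∈ subdiff g z) : v + c j ∈ subdiff g z := by
  intro x
  by_cases hx : g x = ⊤
  · rw [hx]; exact le_top
  · have hvx := hv x
    rw [(gval hne hrep hbot hz).1, (gval hne hrep hbot hx).1] at hvx ⊢
    have hvx' : Mval a r IE hne z + ⟪v, x - z⟫ ≤ Mval a r IE hne x := by exact_mod_cast hvx
    have hcx : ⟪c j, x⟫ ≤ d j := (gval hne hrep hbot hx).2 j hj
    have h2 : ⟪c j, x - z⟫ = ⟪c j, x⟫ - ⟪c j, z⟫ := inner_sub_right _ _ _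
    have h3 : ⟪v + c j, x - z⟫ = ⟪v, x - z⟫ + ⟪c j, x - z⟫ := inner_add_left _ _ _
    have : Mval a r IE hne z + ⟪v + c j, x - z⟫ ≤ Mval a r IE hne x := by
      rw [h3, h2, hact]; linarith
    exact_mod_cast this

end Rep2

section Subderiv

variable {s : ℕ} {g : EuclideanSpace ℝ (Fin m) → EReal} {a c : Fin s → EuclideanSpace ℝ (Fin m)}
  {r d : Fin s → ℝ} {IE IZ : Finset (Fin s)}

variable (hne : IE.Nonempty)
  (hrep : ∀ x (α : ℝ), g x ≤ (α : EReal) ↔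
        ((∀ i ∈ IE, ⟪a i, x⟫ - r i ≤ α) ∧ ∀ j ∈ IZ, ⟪c j, x⟫ ≤ d j))
  (hbot : ∀ z, g z ≠ ⊥)

include hne hrep hbot

lemma subderiv_lower {z v : EuclideanSpace ℝ (Fin m)} (hz : g z ≠ ⊤)
    (hv : v ∈ subdiff g z) (w : EuclideanSpace ℝ (Fin m)) :
    ((⟪v, w⟫ : ℝ) : EReal) ≤ subderiv g z w := by
  set M := Mval a r IE hne z with hM
  have hgz : g z = (M : EReal) := (gval hne hrep hbot hz).1
  set P := (nhdsWithin (0:ℝ) (Set.Ioi (0:ℝ))) ×ˢ 𝓝 w with hP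
  have h1 : ∀ᶠ p : ℝ × EuclideanSpace ℝ (Fin m) in P,
      ((⟪v, p.2⟫ : ℝ) : EReal) ≤ (g (z + p.1 • p.2) - g z) * (((p.1)⁻¹ : ℝ) : EReal) := by
    filter_upwards [Filter.prod_mem_prod self_mem_nhdsWithin univ_mem] with p hp
    obtain ⟨ht, -⟩ := hp
    have ht : (0:ℝ) < p.1 := ht
    by_cases hgx : g (z + p.1 • p.2) = ⊤
    · rw [hgx, hgz, EReal.top_sub_coe, EReal.top_mul_of_pos (by exact_mod_cast inv_pos.2 ht)]
      exact le_top
    · have hγ : g (z + p.1 • p.2) = (((g (z + p.1 • p.2)).toReal : ℝ) : EReal) :=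
        (EReal.coe_toReal hgx (hbot _)).symm
      set γ := (g (z + p.1 • p.2)).toReal
      have hsub := hv (z + p.1 • p.2)
      rw [hgz, hγ] at hsub
      have hinner : ⟪v, z + p.1 • p.2 - z⟫ = p.1 * ⟪v, p.2⟫ := by
        rw [add_sub_cancel_left, real_inner_smul_right]
      rw [hinner] at hsub
      have hreal : M + p.1 * ⟪v, p.2⟫ ≤ γ := by exact_mod_cast hsub
      rw [hγ, hgz, ← EReal.coe_sub, ← EReal.coe_mul, EReal.coe_le_coe_iff]
      rw [← sub_nonneg]
      have : (γ - M) * p.1⁻¹ - ⟪v, p.2⟫ = (γ - (M + p.1 * ⟪v, p.2⟫)) * p.1⁻¹ := by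
        field_simp
        ring
      rw [this]
      exact mul_nonneg (by linarith) (le_of_lt (inv_pos.2 ht))
  have h2 : Filter.Tendsto (fun p : ℝ × EuclideanSpace ℝ (Fin m) => ((⟪v, p.2⟫ : ℝ) : EReal)) P
      (𝓝 ((⟪v, w⟫ : ℝ) : EReal)) := by
    rw [EReal.tendsto_coe]
    exact ((continuous_const.inner continuous_id).tendsto w).comp tendsto_snd
  calc ((⟪v, w⟫ : ℝ) : EReal) = liminf (fun p : ℝ × EuclideanSpace ℝ (Fin m) =>
        ((⟪v, p.2⟫ : ℝ) : EReal)) P := (h2.liminf_eq).symm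
    _ ≤ _ := Filter.liminf_le_liminf h1

end Subderiv

section Upper

variable {s : ℕ} {g : EuclideanSpace ℝ (Fin m) → EReal} {a c : Fin s → EuclideanSpace ℝ (Fin m)}
  {r d : Fin s → ℝ} {IE IZ : Finset (Fin s)}

variable (hne : IE.Nonempty)
  (hrep : ∀ x (α : ℝ), g x ≤ (α : EReal) ↔
        ((∀ i ∈ IE, ⟪a i, x⟫ - r i ≤ α) ∧ ∀ j ∈ IZ, ⟪c j, x⟫ ≤ d j))
  (hbot : ∀ z, g z ≠ ⊥)

include hne hrep hbot

lemma subderiv_upper {z w : EuclideanSpace ℝ (Fin m)} (hz : g z ≠ ⊤)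
    (hIzne : (IE.filter (fun i => ⟪a i, z⟫ - r i = Mval a r IE hne z)).Nonempty)
    (hw : ∀ j ∈ IZ, ⟪c j, z⟫ = d j → ⟪c j, w⟫ ≤ 0) :
    subderiv g z w ≤ (((IE.filter (fun i => ⟪a i, z⟫ - r i = Mval a r IE hne z)).sup' hIzne
      (fun i => ⟪a i, w⟫) : ℝ) : EReal) := by
  classical
  set M := Mval a r IE hne z with hM
  set Iz := IE.filter (fun i => ⟪a i, z⟫ - r i = Mval a r IE hne z) with hIz
  set K := Iz.sup' hIzne (fun i => ⟪a i, w⟫) with hK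
  have hgz : g z = (M : EReal) := (gval hne hrep hbot hz).1
  have hZc : ∀ j ∈ IZ, ⟪c j, z⟫ ≤ d j := (gval hne hrep hbot hz).2
  have ev0 : ∀ᶠ t in 𝓝[>](0:ℝ), 0 < t := eventually_mem_nhdsWithin
  have hinner_a : ∀ (i : Fin s) (t : ℝ), ⟪a i, z + t • w⟫ = ⟪a i, z⟫ + t * ⟪a i, w⟫ := by
    intro i t; rw [inner_add_right, real_inner_smul_right]
  have hinner_c : ∀ (j : Fin s) (t : ℝ), ⟪c j, z + t • w⟫ = ⟪c j, z⟫ + t * ⟪c j, w⟫ := by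
    intro j t; rw [inner_add_right, real_inner_smul_right]
  have evZ : ∀ᶠ t in 𝓝[>](0:ℝ), ∀ j ∈ IZ, ⟪c j, z + t • w⟫ ≤ d j := by
    rw [Filter.eventually_all_finset]
    intro j hj
    rcases eq_or_lt_of_le (hZc j hj) with heq | hlt
    · filter_upwards [ev0] with t ht
      rw [hinner_c j t, heq]
      nlinarith [hw j hj heq, ht.le]
    · have htd : Filter.Tendsto (fun t : ℝ => ⟪c j, z⟫ + t * ⟪c j, w⟫) (𝓝[>](0:ℝ))
          (𝓝 (⟪c j, z⟫)) := by
        have : Filter.Tendsto (fun t : ℝ => ⟪c j, z⟫ + t * ⟪c j, w⟫) (𝓝 (0:ℝ))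
            (𝓝 (⟪c j, z⟫ + 0 * ⟪c j, w⟫)) :=
          (continuous_const.add (continuous_id.mul continuous_const)).continuousAt
        simpa using this.mono_left nhdsWithin_le_nhds
      filter_upwards [htd.eventually_lt_const hlt] with t ht
      rw [hinner_c j t]; linarith
  have evE : ∀ᶠ t in 𝓝[>](0:ℝ), ∀ i ∈ IE, ⟪a i, z⟫ - r i + t * ⟪a i, w⟫ ≤ M + t * K := by
    rw [Filter.eventually_all_finset]
    intro i hi
    by_cases hact : ⟪a i, z⟫ - r i = M
    · have hiIz : i ∈ Iz := Finset.mem_filter.2 ⟨hi, hact⟩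
      have hKi : ⟪a i, w⟫ ≤ K := Finset.le_sup' (fun i => ⟪a i, w⟫) hiIz
      filter_upwards [ev0] with t ht
      nlinarith [mul_le_mul_of_nonneg_left hKi ht.le]
    · have hlt : ⟪a i, z⟫ - r i < M :=
        lt_of_le_of_ne (Finset.le_sup' (fun i => ⟪a i, z⟫ - r i) hi) hact
      have htd : Filter.Tendsto (fun t : ℝ => ⟪a i, z⟫ - r i + t * (⟪a i, w⟫ - K)) (𝓝[>](0:ℝ))
          (𝓝 (⟪a i, z⟫ - r i)) := by
        have : Filter.Tendsto (fun t : ℝ => ⟪a i, z⟫ - r i + t * (⟪a i, w⟫ - K)) (𝓝 (0:ℝ))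
            (𝓝 (⟪a i, z⟫ - r i + 0 * (⟪a i, w⟫ - K))) :=
          (continuous_const.add (continuous_id.mul continuous_const)).continuousAt
        simpa using this.mono_left nhdsWithin_le_nhds
      filter_upwards [htd.eventually_lt_const hlt] with t ht
      nlinarith [ht]
  have hev : ∀ᶠ t in 𝓝[>](0:ℝ),
      (g (z + t • w) - g z) * ((t⁻¹ : ℝ) : EReal) = ((K : ℝ) : EReal) := by
    filter_upwards [ev0, evZ, evE] with t ht hZt hEt
    have hle : g (z + t • w) ≤ ((M + t * K : ℝ) : EReal) := by
      refine (hrep _ _).2 ⟨fun i hi => ?_, hZt⟩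
      rw [hinner_a i t]
      linarith [hEt i hi]
    have hnt : g (z + t • w) ≠ ⊤ := by
      intro htop; rw [htop] at hle; exact absurd (top_le_iff.1 hle) (EReal.coe_ne_top _)
    have hgval := (gval hne hrep hbot hnt).1
    have hMeq : Mval a r IE hne (z + t • w) = M + t * K := by
      apply le_antisymm
      · apply Finset.sup'_le
        intro i hi
        rw [hinner_a i t]
        linarith [hEt i hi]
      · obtain ⟨i1, hi1, hKi1⟩ := Finset.exists_mem_eq_sup' hIzne (fun i => ⟪a i, w⟫)
        obtain ⟨hi1E, hi1act⟩ := Finset.mem_filter.1 hi1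
        have : ⟪a i1, z + t • w⟫ - r i1 ≤ Mval a r IE hne (z + t • w) :=
          Finset.le_sup' (fun i => ⟪a i, z + t • w⟫ - r i) hi1E
        rw [hinner_a i1 t] at this
        rw [← hK] at hKi1
        have heq : M + t * K = ⟪a i1, z⟫ - r i1 + t * ⟪a i1, w⟫ := by
          rw [hKi1, hM, ← hi1act]
        linarith [this, heq]
    rw [hgval, hgz, hMeq, ← EReal.coe_sub, ← EReal.coe_mul, EReal.coe_eq_coe_iff]
    field_simp
    ring
  have hpath : Filter.Tendsto (fun t : ℝ => ((t, w) : ℝ × EuclideanSpace ℝ (Fin m)))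
      (𝓝[>](0:ℝ)) ((𝓝[>](0:ℝ)) ×ˢ 𝓝 w) := tendsto_id.prodMk tendsto_const_nhds
  have h2 : liminf (fun t : ℝ => (g (z + t • w) - g z) * ((t⁻¹ : ℝ) : EReal)) (𝓝[>](0:ℝ))
      = ((K : ℝ) : EReal) := by
    apply Filter.Tendsto.liminf_eq
    exact Filter.Tendsto.congr' (hev.mono fun t ht => ht.symm) tendsto_const_nhds
  calc subderiv g z w
      ≤ liminf (fun p : ℝ × EuclideanSpace ℝ (Fin m) =>
          (g (z + p.1 • p.2) - g z) * (((p.1)⁻¹ : ℝ) : EReal))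
          (map (fun t : ℝ => ((t, w) : ℝ × EuclideanSpace ℝ (Fin m))) (𝓝[>](0:ℝ))) :=
        Filter.liminf_le_liminf_of_le hpath
    _ = liminf (fun t : ℝ => (g (z + t • w) - g z) * ((t⁻¹ : ℝ) : EReal)) (𝓝[>](0:ℝ)) :=
        (Filter.liminf_comp _ _ _).symm
    _ = ((K : ℝ) : EReal) := h2

end Upper

section KconeChar

variable {s : ℕ} {g : EuclideanSpace ℝ (Fin m) → EReal} {a c : Fin s → EuclideanSpace ℝ (Fin m)}
  {r d : Fin s → ℝ} {IE IZ : Finset (Fin s)}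

variable (hne : IE.Nonempty)
  (hrep : ∀ x (α : ℝ), g x ≤ (α : EReal) ↔
        ((∀ i ∈ IE, ⟪a i, x⟫ - r i ≤ α) ∧ ∀ j ∈ IZ, ⟪c j, x⟫ ≤ d j))
  (hbot : ∀ z, g z ≠ ⊥)

include hne hrep hbot

lemma kcone_eq_ncone {z l : EuclideanSpace ℝ (Fin m)} (hz : g z ≠ ⊤) (hl : l ∈ subdiff g z) :
    Kcone g z l = ncone (subdiff g z) l := by
  classical
  ext w
  constructor
  · intro hwK v hv
    have h1 := subderiv_lower hne hrep hbot hz hv w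
    have hwK' : subderiv g z w = ((⟪l, w⟫ : ℝ) : EReal) := hwK
    rw [hwK', EReal.coe_le_coe_iff] at h1
    have h2 : ⟪w, v - l⟫ = ⟪w, v⟫ - ⟪w, l⟫ := inner_sub_right _ _ _
    linarith [h2, real_inner_comm w v, real_inner_comm w l]
  · intro hwN
    have hIzne : (IE.filter (fun i => ⟪a i, z⟫ - r i = Mval a r IE hne z)).Nonempty := by
      obtain ⟨i0, hi0, heq⟩ := Finset.exists_mem_eq_sup' hne (fun i => ⟪a i, z⟫ - r i)
      exact ⟨i0, Finset.mem_filter.2 ⟨hi0, heq.symm⟩⟩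
    have hka : ∀ i ∈ IE.filter (fun i => ⟪a i, z⟫ - r i = Mval a r IE hne z), ⟪a i, w⟫ ≤ ⟪l, w⟫ := by
      intro i hi
      obtain ⟨hiE, hact⟩ := Finset.mem_filter.1 hi
      have hmem : a i ∈ subdiff g z := a_mem_subdiff hne hrep hbot hz hiE hact
      have h3 := hwN (a i) hmem
      have h4 : ⟪w, a i - l⟫ = ⟪w, a i⟫ - ⟪w, l⟫ := inner_sub_right _ _ _
      linarith [h3, h4, real_inner_comm (a i) w, real_inner_comm l w]
    have hwc : ∀ j ∈ IZ, ⟪c j, z⟫ = d j → ⟪c j, w⟫ ≤ 0 := by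
      intro j hj hact
      have hmem : l + c j ∈ subdiff g z := c_add_mem_subdiff hne hrep hbot hz hj hact hl
      have h3 := hwN _ hmem
      rw [add_sub_cancel_left] at h3
      linarith [h3, real_inner_comm (c j) w]
    have hupper := subderiv_upper hne hrep hbot hz hIzne hwc
    have hlower := subderiv_lower hne hrep hbot hz hl w
    have hsup : (IE.filter (fun i => ⟪a i, z⟫ - r i = Mval a r IE hne z)).sup' hIzne
        (fun i => ⟪a i, w⟫) ≤ ⟪l, w⟫ := Finset.sup'_le _ _ hka
    show subderiv g z w = _
    apply le_antisymm
    · calc subderiv g z w ≤ _ := hupper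
        _ ≤ ((⟪l, w⟫ : ℝ) : EReal) := by exact_mod_cast hsup
    · exact hlower

end KconeChar

section Local

variable {s : ℕ} {g : EuclideanSpace ℝ (Fin m) → EReal} {a c : Fin s → EuclideanSpace ℝ (Fin m)}
  {r d : Fin s → ℝ} {IE IZ : Finset (Fin s)}

variable (hne : IE.Nonempty)
  (hrep : ∀ x (α : ℝ), g x ≤ (α : EReal) ↔
        ((∀ i ∈ IE, ⟪a i, x⟫ - r i ≤ α) ∧ ∀ j ∈ IZ, ⟪c j, x⟫ ≤ d j))
  (hbot : ∀ z, g z ≠ ⊥)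

include hne hrep hbot

lemma subdiff_local {zb : EuclideanSpace ℝ (Fin m)} (hzb : g zb ≠ ⊤) :
    ∃ ρ : ℝ, 0 < ρ ∧ ∀ z : EuclideanSpace ℝ (Fin m), dist z zb ≤ ρ →
      ∀ v ∈ subdiff g z, v ∈ subdiff g zb ∧
        ⟪v, z - zb⟫ = Mval a r IE hne z - Mval a r IE hne zb := by
  classical
  set Mb := Mval a r IE hne zb with hMb
  set A := IE.sup' hne (fun i => ‖a i‖) with hA
  have hA0 : 0 ≤ A := by
    obtain ⟨i0, hi0⟩ := hne
    exact le_trans (norm_nonneg (a i0)) (Finset.le_sup' (fun i => ‖a i‖) hi0)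
  set T : Finset ℝ := insert 1
    (((IZ.filter (fun j => ⟪c j, zb⟫ ≠ d j)).image
        (fun j => (d j - ⟪c j, zb⟫) / (2 * ‖c j‖ + 1))) ∪
     ((IE.filter (fun i => ⟪a i, zb⟫ - r i ≠ Mb)).image
        (fun i => (Mb - (⟪a i, zb⟫ - r i)) / (4 * A + 1)))) with hT
  have hTne : T.Nonempty := ⟨1, Finset.mem_insert_self _ _⟩
  set ρ := T.min' hTne with hρ
  have hZc : ∀ j ∈ IZ, ⟪c j, zb⟫ ≤ d j := (gval hne hrep hbot hzb).2
  have hρpos : 0 < ρ := by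
    rw [hρ]
    apply (Finset.lt_min'_iff _ _).2
    intro y hy
    rw [hT] at hy
    rcases Finset.mem_insert.1 hy with h | h
    · rw [h]; norm_num
    · rcases Finset.mem_union.1 h with h | h
      · obtain ⟨j, hj, rfl⟩ := Finset.mem_image.1 h
        obtain ⟨hjZ, hjne⟩ := Finset.mem_filter.1 hj
        have h1 : ⟪c j, zb⟫ < d j := lt_of_le_of_ne (hZc j hjZ) hjne
        have h2 : (0:ℝ) < 2 * ‖c j‖ + 1 := by positivity
        exact div_pos (by linarith) h2
      · obtain ⟨i, hi, rfl⟩ := Finset.mem_image.1 h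
        obtain ⟨hiE, hine⟩ := Finset.mem_filter.1 hi
        have h1 : ⟪a i, zb⟫ - r i < Mb :=
          lt_of_le_of_ne (Finset.le_sup' (fun i => ⟪a i, zb⟫ - r i) hiE) hine
        have h2 : (0:ℝ) < 4 * A + 1 := by linarith
        have h3 : (0:ℝ) < Mb - (⟪a i, zb⟫ - r i) := by linarith
        exact div_pos h3 h2
  refine ⟨ρ, hρpos, fun z hdist v hv => ?_⟩
  have hz : g z ≠ ⊤ := subdiff_ne_top ⟨zb, hzb⟩ hbot hv
  set Mz := Mval a r IE hne z with hMz
  have hgz : g z = (Mz : EReal) := (gval hne hrep hbot hz).1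
  have hgzb : g zb = (Mb : EReal) := (gval hne hrep hbot hzb).1
  set u := z - zb with hu
  have hun : ‖u‖ ≤ ρ := by rw [hu, ← dist_eq_norm]; exact hdist
  have hZz : ∀ j ∈ IZ, ⟪c j, z⟫ ≤ d j := (gval hne hrep hbot hz).2
  have hzu : z = zb + u := by rw [hu]; abel
  -- key: g (z + u) ≤ 2 Mz - Mb
  have hkey : g (z + u) ≤ ((2 * Mz - Mb : ℝ) : EReal) := by
    apply (hrep _ _).2
    constructor
    · intro i hi
      have hsplit : ⟪a i, z + u⟫ = (⟪a i, zb⟫) + 2 * ⟪a i, u⟫ := by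
        rw [hzu]
        rw [inner_add_right, inner_add_right]
        ring
      have hiz : ⟪a i, z⟫ = ⟪a i, zb⟫ + ⟪a i, u⟫ := by
        rw [hzu, inner_add_right]
      have hfz : ⟪a i, z⟫ - r i ≤ Mz := Finset.le_sup' (fun i => ⟪a i, z⟫ - r i) hi
      by_cases hact : ⟪a i, zb⟫ - r i = Mb
      · rw [hsplit]; linarith
      · -- inactive at zb
        have hgap : ⟪a i, zb⟫ - r i < Mb :=
          lt_of_le_of_ne (Finset.le_sup' (fun i => ⟪a i, zb⟫ - r i) hi) hact
        have hρle : ρ ≤ (Mb - (⟪a i, zb⟫ - r i)) / (4 * A + 1) := by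
          apply Finset.min'_le
          rw [hT]
          apply Finset.mem_insert.2; right
          apply Finset.mem_union.2; right
          exact Finset.mem_image.2 ⟨i, Finset.mem_filter.2 ⟨hi, hact⟩, rfl⟩
        have hcs : |⟪a i, u⟫| ≤ A * ρ := by
          calc |⟪a i, u⟫| ≤ ‖a i‖ * ‖u‖ := abs_real_inner_le_norm _ _
            _ ≤ A * ρ := by
              apply mul_le_mul (Finset.le_sup' (fun i => ‖a i‖) hi) hun (norm_nonneg _) hA0
        -- Mz ≥ Mb - A ρ
        obtain ⟨i0, hi0, hMbeq⟩ := Finset.exists_mem_eq_sup' hne (fun i => ⟪a i, zb⟫ - r i)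
        have hcs0 : |⟪a i0, u⟫| ≤ A * ρ := by
          calc |⟪a i0, u⟫| ≤ ‖a i0‖ * ‖u‖ := abs_real_inner_le_norm _ _
            _ ≤ A * ρ := by
              apply mul_le_mul (Finset.le_sup' (fun i => ‖a i‖) hi0) hun (norm_nonneg _) hA0
        have hMzge : Mb - A * ρ ≤ Mz := by
          have h1 : ⟪a i0, z⟫ - r i0 ≤ Mz := Finset.le_sup' (fun i => ⟪a i, z⟫ - r i) hi0
          have h2 : ⟪a i0, z⟫ = ⟪a i0, zb⟫ + ⟪a i0, u⟫ := by rw [hzu, inner_add_right]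
          have h3 := abs_le.1 hcs0
          have hMbeq' : Mb = ⟪a i0, zb⟫ - r i0 := hMbeq
          rw [h2] at h1
          linarith [h1, h3.1, hMbeq']
        have hgap4 : 4 * (A * ρ) ≤ Mb - (⟪a i, zb⟫ - r i) := by
          have h4 : (0:ℝ) < 4 * A + 1 := by linarith
          have := mul_le_mul_of_nonneg_left hρle (by linarith : (0:ℝ) ≤ 4 * A)
          have h5 : (4 * A) * ((Mb - (⟪a i, zb⟫ - r i)) / (4 * A + 1)) ≤ Mb - (⟪a i, zb⟫ - r i) := by
            rw [mul_comm (4 * A), div_mul_eq_mul_div, div_le_iff₀ h4]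
            nlinarith
          linarith [this, h5]
        have h3 := abs_le.1 hcs
        rw [hsplit]
        linarith
    · intro j hj
      have hsplit : ⟪c j, z + u⟫ = ⟪c j, z⟫ + ⟪c j, u⟫ := inner_add_right _ _ _
      have hjz : ⟪c j, z⟫ = ⟪c j, zb⟫ + ⟪c j, u⟫ := by rw [hzu, inner_add_right]
      by_cases hact : ⟪c j, zb⟫ = d j
      · have : ⟪c j, u⟫ ≤ 0 := by
          have := hZz j hj
          rw [hjz, hact] at this
          linarith
        rw [hsplit]
        linarith [hZz j hj]
      · have hslack : ⟪c j, zb⟫ < d j := lt_of_le_of_ne (hZc j hj) hact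
        have hρle : ρ ≤ (d j - ⟪c j, zb⟫) / (2 * ‖c j‖ + 1) := by
          apply Finset.min'_le
          rw [hT]
          apply Finset.mem_insert.2; right
          apply Finset.mem_union.2; left
          exact Finset.mem_image.2 ⟨j, Finset.mem_filter.2 ⟨hj, hact⟩, rfl⟩
        have hcs : |⟪c j, u⟫| ≤ ‖c j‖ * ρ := by
          calc |⟪c j, u⟫| ≤ ‖c j‖ * ‖u‖ := abs_real_inner_le_norm _ _
            _ ≤ ‖c j‖ * ρ := mul_le_mul_of_nonneg_left hun (norm_nonneg _)
        have h2 : 2 * (‖c j‖ * ρ) ≤ d j - ⟪c j, zb⟫ := by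
          have hden : (0:ℝ) < 2 * ‖c j‖ + 1 := by positivity
          have := mul_le_mul_of_nonneg_left hρle (by positivity : (0:ℝ) ≤ 2 * ‖c j‖)
          have h5 : (2 * ‖c j‖) * ((d j - ⟪c j, zb⟫) / (2 * ‖c j‖ + 1)) ≤ d j - ⟪c j, zb⟫ := by
            rw [mul_comm (2 * ‖c j‖), div_mul_eq_mul_div, div_le_iff₀ hden]
            nlinarith [norm_nonneg (c j)]
          linarith [this, h5]
        have h3 := abs_le.1 hcs
        rw [hsplit, hjz]
        linarith
  -- now conclude
  have hvz := hv (z + u)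
  rw [hgz] at hvz
  have hvz2 : ((Mz : ℝ) : EReal) + ((⟪v, u⟫ : ℝ) : EReal) ≤ ((2 * Mz - Mb : ℝ) : EReal) := by
    calc ((Mz : ℝ) : EReal) + ((⟪v, u⟫ : ℝ) : EReal)
        = (Mz : EReal) + ((⟪v, z + u - z⟫ : ℝ) : EReal) := by rw [add_sub_cancel_left]
      _ ≤ g (z + u) := hvz
      _ ≤ _ := hkey
  have hineq1 : Mz + ⟪v, u⟫ ≤ 2 * Mz - Mb := by exact_mod_cast hvz2
  have hvzb := hv zb
  rw [hgz, hgzb] at hvzb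
  have hineq2 : Mz + ⟪v, zb - z⟫ ≤ Mb := by exact_mod_cast hvzb
  have hneg : ⟪v, zb - z⟫ + ⟪v, u⟫ = 0 := by
    rw [← inner_add_right]
    have h0 : zb - z + u = 0 := by rw [hu]; abel
    rw [h0, inner_zero_right]
  have heq : ⟪v, u⟫ = Mz - Mb := by linarith [hineq1, hineq2, hneg]
  refine ⟨fun x => ?_, heq⟩
  by_cases hx : g x = ⊤
  · rw [hx]; exact le_top
  · have hgx : g x = ((Mval a r IE hne x : ℝ) : EReal) := (gval hne hrep hbot hx).1
    have hvx := hv x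
    rw [hgz, hgx] at hvx
    have hvx' : Mz + ⟪v, x - z⟫ ≤ Mval a r IE hne x := by exact_mod_cast hvx
    rw [hgzb, hgx]
    have hsplit : ⟪v, x - zb⟫ = ⟪v, x - z⟫ + ⟪v, u⟫ := by
      rw [← inner_add_right]
      congr 1
      rw [hu]
      abel
    have : Mb + ⟪v, x - zb⟫ ≤ Mval a r IE hne x := by
      rw [hsplit, heq]; linarith
    exact_mod_cast this

end Local

section Intrinsic

variable {E : Type*} [NormedAddCommGroup E] [NormedSpace ℝ E]

lemma intrinsic_ball {C : Set E} {x : E} (hx : x ∈ intrinsicInterior ℝ C) :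
    ∃ ε > (0:ℝ), x ∈ C ∧ ∀ y ∈ (affineSpan ℝ C : Set E), dist y x < ε → y ∈ C := by
  obtain ⟨y, hy, rfl⟩ := (mem_intrinsicInterior).1 hx
  obtain ⟨ε, hε, hball⟩ := Metric.isOpen_iff.1 isOpen_interior y hy
  have hyC : (y : E) ∈ C := Set.mem_preimage.1 (interior_subset hy)
  refine ⟨ε, hε, hyC, fun y' hy' hd => ?_⟩
  have : (⟨y', hy'⟩ : affineSpan ℝ C) ∈ Metric.ball y ε := by
    rw [Metric.mem_ball, Subtype.dist_eq]
    exact hd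
  exact Set.mem_preimage.1 (interior_subset (hball this))

lemma mem_intrinsic {C : Set E} {x : E} (hx : x ∈ C) {ε : ℝ} (hε : 0 < ε)
    (hb : ∀ y ∈ (affineSpan ℝ C : Set E), dist y x < ε → y ∈ C) :
    x ∈ intrinsicInterior ℝ C := by
  have hxs : x ∈ (affineSpan ℝ C : Set E) := subset_affineSpan ℝ C hx
  refine (mem_intrinsicInterior).2 ⟨⟨x, hxs⟩, ?_, rfl⟩
  rw [mem_interior]
  refine ⟨Metric.ball ⟨x, hxs⟩ ε, ?_, Metric.isOpen_ball, Metric.mem_ball_self hε⟩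
  rintro ⟨y, hy⟩ hmem
  rw [Metric.mem_ball, Subtype.dist_eq] at hmem
  exact hb y hy hmem

end Intrinsic

section NconeRI

variable {m : ℕ}

lemma ncone_eq_orth {C : Set (EuclideanSpace ℝ (Fin m))} {l : EuclideanSpace ℝ (Fin m)}
    (hl : l ∈ C) {δ : ℝ} (hδ : 0 < δ)
    (hb : ∀ y ∈ (affineSpan ℝ C : Set (EuclideanSpace ℝ (Fin m))), dist y l < δ → y ∈ C) :
    ncone C l = {u | ∀ y ∈ C, ⟪u, y - l⟫ = 0} := by
  ext u
  constructor
  · intro hu y hy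
    have h1 : ⟪u, y - l⟫ ≤ 0 := hu y hy
    -- consider l + s (l - y)
    set s0 := δ / (2 * (‖l - y‖ + 1)) with hs0
    have hs0pos : 0 < s0 := by
      apply div_pos hδ
      have := norm_nonneg (l - y)
      linarith
    have hspan : l + s0 • (l - y) ∈ (affineSpan ℝ C : Set (EuclideanSpace ℝ (Fin m))) := by
      have h2 := AffineSubspace.smul_vsub_vadd_mem (affineSpan ℝ C) s0
        (subset_affineSpan ℝ C hl) (subset_affineSpan ℝ C hy) (subset_affineSpan ℝ C hl)
      simpa [vsub_eq_sub, vadd_eq_add, add_comm] using h2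
    have hdist : dist (l + s0 • (l - y)) l < δ := by
      rw [dist_eq_norm, add_sub_cancel_left, norm_smul, Real.norm_eq_abs, abs_of_pos hs0pos]
      rw [hs0]
      have hn : ‖l - y‖ < 2 * (‖l - y‖ + 1) := by linarith [norm_nonneg (l - y)]
      calc δ / (2 * (‖l - y‖ + 1)) * ‖l - y‖
          < δ / (2 * (‖l - y‖ + 1)) * (2 * (‖l - y‖ + 1)) := by
            apply mul_lt_mul_of_pos_left hn
            apply div_pos hδ (by linarith [norm_nonneg (l - y)])
        _ = δ := by field_simp
      -- done
    have hmem : l + s0 • (l - y) ∈ C := hb _ hspan hdist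
    have h3 : ⟪u, (l + s0 • (l - y)) - l⟫ ≤ 0 := hu _ hmem
    rw [add_sub_cancel_left, real_inner_smul_right] at h3
    have h4 : ⟪u, l - y⟫ ≤ 0 := by nlinarith [h3, hs0pos]
    have h5 : ⟪u, y - l⟫ + ⟪u, l - y⟫ = 0 := by
      rw [← inner_add_right]
      have h0 : y - l + (l - y) = 0 := by abel
      rw [h0, inner_zero_right]
    linarith
  · intro hu y hy
    rw [hu y hy]

end NconeRI

lemma ncone_ri_const {m : ℕ} {C : Set (EuclideanSpace ℝ (Fin m))}
    {l lb : EuclideanSpace ℝ (Fin m)} (hl : l ∈ C) (hlb : lb ∈ C)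
    {δ1 δ2 : ℝ} (hδ1 : 0 < δ1) (hδ2 : 0 < δ2)
    (hb1 : ∀ y ∈ (affineSpan ℝ C : Set (EuclideanSpace ℝ (Fin m))), dist y l < δ1 → y ∈ C)
    (hb2 : ∀ y ∈ (affineSpan ℝ C : Set (EuclideanSpace ℝ (Fin m))), dist y lb < δ2 → y ∈ C) :
    ncone C l = ncone C lb := by
  rw [ncone_eq_orth hl hδ1 hb1, ncone_eq_orth hlb hδ2 hb2]
  ext u
  simp only [Set.mem_setOf_eq]
  constructor
  · intro h y hy
    have h1 := h y hy
    have h2 := h lb hlb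
    rw [inner_sub_right] at h1 h2 ⊢
    linarith
  · intro h y hy
    have h1 := h y hy
    have h2 := h l hl
    rw [inner_sub_right] at h1 h2 ⊢
    linarith

section Face

variable {m : ℕ} {s : ℕ} {g : EuclideanSpace ℝ (Fin m) → EReal}
  {a c : Fin s → EuclideanSpace ℝ (Fin m)}
  {r d : Fin s → ℝ} {IE IZ : Finset (Fin s)}

variable (hne : IE.Nonempty)
  (hrep : ∀ x (α : ℝ), g x ≤ (α : EReal) ↔
        ((∀ i ∈ IE, ⟪a i, x⟫ - r i ≤ α) ∧ ∀ j ∈ IZ, ⟪c j, x⟫ ≤ d j))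
  (hbot : ∀ z, g z ≠ ⊥)

include hne hrep hbot

/-- The reverse inclusion: if `l ∈ subdiff g z` is near the relative interior point `lb` of
`subdiff g zb`, then `subdiff g zb ⊆ subdiff g z`. -/
lemma subdiff_rev {zb lb z l : EuclideanSpace ℝ (Fin m)} (hzb : g zb ≠ ⊤) (hz : g z ≠ ⊤)
    {ε : ℝ} (hε : 0 < ε)
    (hball : ∀ y ∈ (affineSpan ℝ (subdiff g zb) : Set (EuclideanSpace ℝ (Fin m))),
      dist y lb < ε → y ∈ subdiff g zb)
    (hlzb : l ∈ subdiff g zb) (hdl : dist l lb < ε)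
    (heq : ⟪l, z - zb⟫ = Mval a r IE hne z - Mval a r IE hne zb) :
    ∀ v ∈ subdiff g zb, v ∈ subdiff g z := by
  intro v hv
  set Mz := Mval a r IE hne z with hMz
  set Mb := Mval a r IE hne zb with hMb
  have hgz : g z = (Mz : EReal) := (gval hne hrep hbot hz).1
  have hgzb : g zb = (Mb : EReal) := (gval hne hrep hbot hzb).1
  -- every subgradient at zb satisfies ⟪w, z - zb⟫ ≤ Mz - Mb
  have hface : ∀ w ∈ subdiff g zb, ⟪w, z - zb⟫ ≤ Mz - Mb := by
    intro w hw
    have := hw z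
    rw [hgz, hgzb] at this
    have h1 : Mb + ⟪w, z - zb⟫ ≤ Mz := by exact_mod_cast this
    linarith
  -- the extension point
  set s0 := (ε - dist l lb) / (2 * (‖l - v‖ + 1)) with hs0
  have hs0pos : 0 < s0 := by
    apply div_pos (by linarith)
    have := norm_nonneg (l - v)
    linarith
  have hspan : l + s0 • (l - v) ∈ (affineSpan ℝ (subdiff g zb) : Set (EuclideanSpace ℝ (Fin m))) := by
    have h2 := AffineSubspace.smul_vsub_vadd_mem (affineSpan ℝ (subdiff g zb)) s0
      (subset_affineSpan ℝ _ hlzb) (subset_affineSpan ℝ _ hv) (subset_affineSpan ℝ _ hlzb)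
    simpa [vsub_eq_sub, vadd_eq_add, add_comm] using h2
  have hdista : dist (l + s0 • (l - v)) lb < ε := by
    calc dist (l + s0 • (l - v)) lb ≤ dist (l + s0 • (l - v)) l + dist l lb := dist_triangle _ _ _
      _ < (ε - dist l lb) + dist l lb := by
          apply (add_lt_add_iff_right (dist l lb)).2
          rw [dist_eq_norm, add_sub_cancel_left, norm_smul, Real.norm_eq_abs, abs_of_pos hs0pos]
          rw [hs0]
          have hn : ‖l - v‖ < 2 * (‖l - v‖ + 1) := by linarith [norm_nonneg (l - v)]
          calc (ε - dist l lb) / (2 * (‖l - v‖ + 1)) * ‖l - v‖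
              < (ε - dist l lb) / (2 * (‖l - v‖ + 1)) * (2 * (‖l - v‖ + 1)) := by
                apply mul_lt_mul_of_pos_left hn
                apply div_pos (by linarith) (by linarith [norm_nonneg (l - v)])
            _ = ε - dist l lb := by field_simp
      _ = ε := by ring
  have hmem : l + s0 • (l - v) ∈ subdiff g zb := hball _ hspan hdista
  have h3 : ⟪l + s0 • (l - v), z - zb⟫ ≤ Mz - Mb := hface _ hmem
  rw [inner_add_left, real_inner_smul_left, inner_sub_left] at h3
  have h4 : ⟪v, z - zb⟫ ≤ Mz - Mb := hface v hv
  have h5 : ⟪v, z - zb⟫ = Mz - Mb := by nlinarith [h3, h4, heq, hs0pos]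
  -- conclude v ∈ subdiff g z
  intro x
  by_cases hx : g x = ⊤
  · rw [hx]; exact le_top
  · have hgx : g x = ((Mval a r IE hne x : ℝ) : EReal) := (gval hne hrep hbot hx).1
    have hvx := hv x
    rw [hgzb, hgx] at hvx
    have hvx' : Mb + ⟪v, x - zb⟫ ≤ Mval a r IE hne x := by exact_mod_cast hvx
    rw [hgz, hgx]
    have hsplit : ⟪v, x - zb⟫ = ⟪v, x - z⟫ + ⟪v, z - zb⟫ := by
      rw [← inner_add_right]
      congr 1
      abel
    have : Mz + ⟪v, x - z⟫ ≤ Mval a r IE hne x := by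
      rw [hsplit, h5] at hvx'
      linarith
    exact_mod_cast this

end Face

end Aux9

/-- local constancy of the critical cone under nondegeneracy. -/
theorem stmt9 {m : ℕ} (g : EuclideanSpace ℝ (Fin m) → EReal) (hg : IsPolyhedralFn g)
    (zb lb : EuclideanSpace ℝ (Fin m)) (hl : lb ∈ subdiff g zb)
    (hri : lb ∈ intrinsicInterior ℝ (subdiff g zb)) :
    ∃ r > (0 : ℝ), ∀ z l : EuclideanSpace ℝ (Fin m), l ∈ subdiff g z →
      dist (z, l) (zb, lb) ≤ r →
      l ∈ intrinsicInterior ℝ (subdiff g z) ∧ Kcone g z l = Kcone g zb lb := by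
  classical
  obtain ⟨ss, a, c, r, d, IE, IZ, hne, hrep⟩ := exists_rep g hg
  have hbot := hg.2.1
  have hprop := hg.1
  have hzbtop : g zb ≠ ⊤ := subdiff_ne_top hprop hbot hl
  obtain ⟨ε, hε, hlbC, hball⟩ := intrinsic_ball hri
  obtain ⟨ρ, hρ, hloc⟩ := subdiff_local hne hrep hbot hzbtop
  refine ⟨min ρ (ε/2), lt_min hρ (by linarith), fun z l hlz hdist => ?_⟩
  have hdz : dist z zb ≤ ρ := by
    calc dist z zb ≤ dist (z,l) (zb,lb) := by rw [Prod.dist_eq]; exact le_max_left _ _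
      _ ≤ min ρ (ε/2) := hdist
      _ ≤ ρ := min_le_left _ _
  have hdl : dist l lb ≤ ε/2 := by
    calc dist l lb ≤ dist (z,l) (zb,lb) := by rw [Prod.dist_eq]; exact le_max_right _ _
      _ ≤ min ρ (ε/2) := hdist
      _ ≤ ε/2 := min_le_right _ _
  have hdl' : dist l lb < ε := by linarith
  have hztop : g z ≠ ⊤ := subdiff_ne_top hprop hbot hlz
  obtain ⟨hlzb, heq⟩ := hloc z hdz l hlz
  have hsub : subdiff g z = subdiff g zb := by
    apply Set.Subset.antisymm
    · intro v hv; exact (hloc z hdz v hv).1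
    · intro v hv; exact subdiff_rev hne hrep hbot hzbtop hztop hε hball hlzb hdl' heq v hv
  have hball_l : ∀ y ∈ (affineSpan ℝ (subdiff g zb) : Set (EuclideanSpace ℝ (Fin m))),
      dist y l < ε/2 → y ∈ subdiff g zb := by
    intro y hy hd
    apply hball y hy
    calc dist y lb ≤ dist y l + dist l lb := dist_triangle _ _ _
      _ < ε/2 + ε/2 := add_lt_add_of_lt_of_le hd hdl
      _ = ε := by ring
  constructor
  · rw [hsub]
    exact mem_intrinsic hlzb (by linarith : (0:ℝ) < ε/2) hball_l
  · have h1 : Kcone g z l = ncone (subdiff g z) l := kcone_eq_ncone hne hrep hbot hztop hlz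
    have h2 : Kcone g zb lb = ncone (subdiff g zb) lb := kcone_eq_ncone hne hrep hbot hzbtop hl
    rw [h1, h2, hsub]
    exact ncone_ri_const hlzb hlbC (by linarith : (0:ℝ) < ε/2) hε hball_l hball
end
end

section
/- Let g : ℝᵐ → ℝ ∪ {∞} be a polyhedral function and (z̄, λ̄) ∈ gph ∂g. Then the tangent cone to gph ∂g at (z̄, λ̄) equals gph N_K, where K = K_g(z̄, λ̄) is the critical cone; equivalently, the graphical derivative of ∂g at z̄ for λ̄ is the normal cone mapping N_K. -/
open Filter Topology Set Metric

noncomputable section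

set_option linter.unusedSectionVars false
set_option maxHeartbeats 1000000

section Toolbox

variable {F : Type*} [NormedAddCommGroup F] [InnerProductSpace ℝ F]
variable {ι : Type*}

local notation "⟪" x ", " y "⟫" => @inner ℝ _ _ x y

/-- The finitely generated cone on generators `g i`, `i ∈ s`. -/
def coneOf (s : Finset ι) (g : ι → F) : Set F :=
  {x | ∃ t : ι → ℝ, (∀ i, 0 ≤ t i) ∧ x = ∑ i ∈ s, t i • g i}

lemma zero_mem_coneOf (s : Finset ι) (g : ι → F) : (0:F) ∈ coneOf s g :=
  ⟨0, fun _ => le_rfl, by simp⟩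

lemma smul_mem_coneOf {s : Finset ι} {g : ι → F} {x : F} (hx : x ∈ coneOf s g) {a : ℝ}
    (ha : 0 ≤ a) : a • x ∈ coneOf s g := by
  obtain ⟨t, ht, rfl⟩ := hx
  exact ⟨fun i => a * t i, fun i => mul_nonneg ha (ht i), by
    rw [Finset.smul_sum]; exact Finset.sum_congr rfl fun i _ => smul_smul a (t i) (g i)⟩

lemma add_mem_coneOf {s : Finset ι} {g : ι → F} {x y : F} (hx : x ∈ coneOf s g)
    (hy : y ∈ coneOf s g) : x + y ∈ coneOf s g := by
  obtain ⟨t, ht, rfl⟩ := hx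
  obtain ⟨t', ht', rfl⟩ := hy
  exact ⟨fun i => t i + t' i, fun i => add_nonneg (ht i) (ht' i), by
    rw [← Finset.sum_add_distrib]; exact Finset.sum_congr rfl fun i _ => (add_smul _ _ _).symm⟩

lemma mem_coneOf_of_mem {s : Finset ι} {g : ι → F} {i : ι} (hi : i ∈ s) : g i ∈ coneOf s g := by
  classical
  exact ⟨fun j => if j = i then 1 else 0, fun j => by positivity, by
    simp [ite_smul, Finset.sum_ite_eq' s i, hi]⟩

lemma convex_coneOf (s : Finset ι) (g : ι → F) : Convex ℝ (coneOf s g) := by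
  intro x hx y hy a b ha hb _
  exact add_mem_coneOf (smul_mem_coneOf hx ha) (smul_mem_coneOf hy hb)

/-- Linear independence of a finite subfamily, in sum form. -/
def FinIndep (s : Finset ι) (g : ι → F) : Prop :=
  ∀ t : ι → ℝ, ∑ i ∈ s, t i • g i = 0 → ∀ i ∈ s, t i = 0

/-- Conic Carathéodory: every element of a finitely generated cone lies in the cone
generated by a linearly independent subfamily. -/
lemma coneOf_carath (s : Finset ι) (g : ι → F) :
    ∀ x ∈ coneOf s g, ∃ s' ⊆ s, FinIndep s' g ∧ x ∈ coneOf s' g := by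
  classical
  induction s using Finset.strongInduction with
  | _ s ih =>
    intro x hx
    by_cases hind : FinIndep s g
    · exact ⟨s, subset_rfl, hind, hx⟩
    · have hdep : ∃ lam : ι → ℝ, (∑ i ∈ s, lam i • g i = 0) ∧ ∃ j ∈ s, 0 < lam j := by
        simp only [FinIndep, not_forall] at hind
        obtain ⟨lam, hlam0, j, hjs, hlamj⟩ := hind
        rcases lt_or_gt_of_ne hlamj with h | h
        · refine ⟨-lam, by simpa using congrArg Neg.neg hlam0, j, hjs, by simpa using h⟩
        · exact ⟨lam, hlam0, j, hjs, h⟩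
      obtain ⟨lam, hlam0, j, hjs, hlamj⟩ := hdep
      obtain ⟨t, ht0, htx⟩ := hx
      set P := s.filter (fun i => 0 < lam i) with hP
      have hPne : P.Nonempty := ⟨j, by simp [hP, hjs, hlamj]⟩
      obtain ⟨i₀, hi₀P, hθ⟩ := Finset.exists_min_image P (fun i => t i / lam i) hPne
      have hi₀s : i₀ ∈ s := (Finset.mem_filter.mp hi₀P).1
      have hlami₀ : 0 < lam i₀ := (Finset.mem_filter.mp hi₀P).2
      set θ := t i₀ / lam i₀ with hθdef
      have hθ0 : 0 ≤ θ := div_nonneg (ht0 _) hlami₀.le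
      set t' : ι → ℝ := fun i => if i ∈ s.erase i₀ then t i - θ * lam i else 0 with ht'
      have ht'0 : ∀ i, 0 ≤ t' i := by
        intro i
        simp only [ht']
        split
        · rename_i hi
          have his : i ∈ s := Finset.mem_of_mem_erase hi
          rcases le_or_gt (lam i) 0 with h | h
          · nlinarith [ht0 i]
          · have hiP : i ∈ P := Finset.mem_filter.mpr ⟨his, h⟩
            have h2 := (le_div_iff₀ h).mp (hθ i hiP)
            linarith
        · exact le_rfl
      have hx' : x ∈ coneOf (s.erase i₀) g := by
        refine ⟨t', ht'0, ?_⟩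
        have h1 : ∑ i ∈ s.erase i₀, t' i • g i = ∑ i ∈ s.erase i₀, (t i - θ * lam i) • g i :=
          Finset.sum_congr rfl fun i hi => by simp only [ht', if_pos hi]
        have h3 : t i₀ - θ * lam i₀ = 0 := by
          rw [hθdef, div_mul_cancel₀ _ hlami₀.ne', sub_self]
        have h4 : ∑ i ∈ s, (t i - θ * lam i) • g i
            = ∑ i ∈ s, t i • g i - θ • ∑ i ∈ s, lam i • g i := by
          rw [Finset.smul_sum, ← Finset.sum_sub_distrib]
          refine Finset.sum_congr rfl fun i _ => ?_
          rw [sub_smul, smul_smul]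
        refine Eq.symm ?_
        calc ∑ i ∈ s.erase i₀, t' i • g i
            = ∑ i ∈ s.erase i₀, (t i - θ * lam i) • g i := h1
          _ = (t i₀ - θ * lam i₀) • g i₀ + ∑ i ∈ s.erase i₀, (t i - θ * lam i) • g i := by
              rw [h3, zero_smul, zero_add]
          _ = ∑ i ∈ s, (t i - θ * lam i) • g i := Finset.add_sum_erase s (fun i => (t i - θ * lam i) • g i) hi₀s
          _ = ∑ i ∈ s, t i • g i - θ • ∑ i ∈ s, lam i • g i := h4
          _ = x := by rw [hlam0, smul_zero, sub_zero, htx]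
      obtain ⟨s', hs's, hind', hxs'⟩ :=
        ih (s.erase i₀) (Finset.erase_ssubset hi₀s) x hx'
      exact ⟨s', hs's.trans (Finset.erase_subset _ _), hind', hxs'⟩

end Toolbox

section FinDim
variable {F : Type*} [NormedAddCommGroup F] [InnerProductSpace ℝ F] [FiniteDimensional ℝ F]
variable {ι : Type*}

local notation "⟪" x ", " y "⟫" => @inner ℝ _ _ x y

/-- The summing linear map associated to a finite subfamily. -/
def sumMap (s : Finset ι) (g : ι → F) : ((↥s) → ℝ) →ₗ[ℝ] F where
  toFun := fun t => ∑ i : ↥s, t i • g (i : ι)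
  map_add' := by intro t u; simp [add_smul, Finset.sum_add_distrib]
  map_smul' := by intro a t; simp [smul_smul, Finset.smul_sum]

lemma sumMap_eq (s : Finset ι) (g : ι → F) (t : ι → ℝ) :
    sumMap s g (fun i : ↥s => t i) = ∑ i ∈ s, t i • g i := by
  classical
  show ∑ i : ↥s, t i • g (i:ι) = _
  rw [← Finset.sum_coe_sort s (fun i => t i • g i)]

lemma sumMap_inj {s : Finset ι} {g : ι → F} (h : FinIndep s g) :
    LinearMap.ker (sumMap s g) = ⊥ := by
  classical
  rw [LinearMap.ker_eq_bot']
  intro t ht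
  have : sumMap s g t = ∑ i ∈ s, (fun j => if hj : j ∈ s then t ⟨j, hj⟩ else 0) i • g i := by
    show ∑ i : ↥s, t i • g (i:ι) = _
    rw [← Finset.sum_coe_sort s (fun i => (if hj : i ∈ s then t ⟨i, hj⟩ else 0) • g i)]
    exact Finset.sum_congr rfl fun i _ => by rw [dif_pos i.2]
  rw [this] at ht
  funext i
  have := h _ ht i i.2
  rwa [dif_pos i.2] at this

lemma coneOf_eq_image {s : Finset ι} {g : ι → F} :
    coneOf s g = (sumMap s g) '' {t : ↥s → ℝ | ∀ i, 0 ≤ t i} := by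
  classical
  ext x
  constructor
  · rintro ⟨t, ht0, rfl⟩
    exact ⟨fun i => t i, fun i => ht0 i, sumMap_eq s g t⟩
  · rintro ⟨t, ht0, rfl⟩
    refine ⟨fun j => if hj : j ∈ s then t ⟨j, hj⟩ else 0, fun j => ?_, ?_⟩
    · by_cases hj : j ∈ s
      · simpa [hj] using ht0 ⟨j, hj⟩
      · simp [hj]
    · rw [← sumMap_eq s g]
      congr 1
      funext i
      rw [dif_pos i.2]

lemma coneOf_indep_closed {s : Finset ι} {g : ι → F} (h : FinIndep s g) :
    IsClosed (coneOf s g) := by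
  rw [coneOf_eq_image]
  have hemb : IsClosedEmbedding (sumMap s g) :=
    LinearMap.isClosedEmbedding_of_injective (sumMap_inj h)
  refine hemb.isClosedMap _ ?_
  have : {t : ↥s → ℝ | ∀ i, 0 ≤ t i} = ⋂ i, {t : ↥s → ℝ | 0 ≤ t i} := by
    ext t; simp [Set.mem_iInter]
  rw [this]
  exact isClosed_iInter fun i => isClosed_le continuous_const (continuous_apply i)

lemma coneOf_closed (s : Finset ι) (g : ι → F) : IsClosed (coneOf s g) := by
  classical
  have : coneOf s g = ⋃ s' ∈ {s' : Finset ι | s' ⊆ s ∧ FinIndep s' g}, coneOf s' g := by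
    ext x
    constructor
    · intro hx
      obtain ⟨s', hs', hind, hx'⟩ := coneOf_carath s g x hx
      exact Set.mem_biUnion ⟨hs', hind⟩ hx'
    · rintro hx
      obtain ⟨s', hs', hx'⟩ := Set.mem_iUnion₂.mp hx
      obtain ⟨t, ht0, rfl⟩ := hx'
      refine ⟨fun i => if i ∈ s' then t i else 0, fun i => ?_, ?_⟩
      · by_cases his : i ∈ s' <;> simp [his, ht0 i]
      · simp only [ite_smul, zero_smul]
        rw [Finset.sum_ite_mem s s' (fun i => t i • g i), Finset.inter_eq_right.mpr hs'.1]
  rw [this]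
  refine Set.Finite.isClosed_biUnion ?_ ?_
  · exact Set.Finite.subset (s.powerset.finite_toSet)
      (fun s' hs' => Finset.mem_coe.mpr (Finset.mem_powerset.mpr hs'.1))
  · intro s' hs'
    exact coneOf_indep_closed hs'.2


lemma finIndep_bound {s' : Finset ι} {g : ι → F} (h : FinIndep s' g) :
    ∃ M : ℝ, 0 < M ∧ ∀ t : ι → ℝ, (∀ i, i ∉ s' → t i = 0) →
      ∀ i, |t i| ≤ M * ‖∑ j ∈ s', t j • g j‖ := by
  classical
  set L := sumMap s' g with hL
  have hinj : Function.Injective L := LinearMap.ker_eq_bot.mp (sumMap_inj h)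
  set Eq := LinearEquiv.ofInjective L hinj with hEq
  set K := LinearMap.toContinuousLinearMap Eq.symm.toLinearMap with hK
  refine ⟨‖K‖ + 1, by positivity, ?_⟩
  intro t ht i
  by_cases his : i ∈ s'
  · set x := ∑ j ∈ s', t j • g j with hx
    have hxL : L (fun i : ↥s' => t i) = x := sumMap_eq s' g t
    have hmem : x ∈ LinearMap.range L := ⟨_, hxL⟩
    have hfwd : Eq (fun i : ↥s' => t i) = ⟨x, hmem⟩ := by
      apply Subtype.ext
      rw [hEq, LinearEquiv.ofInjective_apply]
      exact hxL
    have hsymm : Eq.symm ⟨x, hmem⟩ = (fun i : ↥s' => t i) := by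
      rw [← hfwd, LinearEquiv.symm_apply_apply]
    have hnorm : ‖(fun i : ↥s' => t i)‖ ≤ ‖K‖ * ‖x‖ := by
      have h0 : K ⟨x, hmem⟩ = Eq.symm ⟨x, hmem⟩ := rfl
      have h1 : (fun i : ↥s' => t i) = K ⟨x, hmem⟩ := by rw [h0, hsymm]
      rw [h1]
      calc ‖K ⟨x, hmem⟩‖ ≤ ‖K‖ * ‖(⟨x, hmem⟩ : LinearMap.range L)‖ := K.le_opNorm _
        _ = ‖K‖ * ‖x‖ := rfl
    have h2 : |t i| ≤ ‖(fun i : ↥s' => t i)‖ := by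
      have := norm_le_pi_norm (fun i : ↥s' => t i) ⟨i, his⟩
      simpa [Real.norm_eq_abs] using this
    have h3 : ‖K‖ * ‖x‖ ≤ (‖K‖ + 1) * ‖x‖ := by
      have : (0:ℝ) ≤ ‖x‖ := norm_nonneg _
      nlinarith
    linarith
  · rw [ht i his]
    simp only [abs_zero]
    positivity

lemma coneOf_bound (s : Finset ι) (g : ι → F) :
    ∃ M : ℝ, 0 < M ∧ ∀ x ∈ coneOf s g, ∃ t : ι → ℝ, (∀ i, 0 ≤ t i) ∧
      (x = ∑ i ∈ s, t i • g i) ∧ ∀ i, t i ≤ M * ‖x‖ := by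
  classical
  set Mf : Finset ι → ℝ := fun s' =>
    if h : FinIndep s' g then (finIndep_bound h).choose else 1 with hMf
  have hMfpos : ∀ s', 0 < Mf s' := by
    intro s'
    by_cases h : FinIndep s' g
    · have hh : Mf s' = (finIndep_bound h).choose := by simp only [hMf]; rw [dif_pos h]
      rw [hh]; exact (finIndep_bound h).choose_spec.1
    · have hh : Mf s' = 1 := by simp only [hMf]; rw [dif_neg h]
      rw [hh]; exact one_pos
  have hpne : (s.powerset).Nonempty := ⟨∅, Finset.empty_mem_powerset s⟩
  set M := (s.powerset).sup' hpne Mf with hM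
  have hMpos : 0 < M := lt_of_lt_of_le (hMfpos ∅) (Finset.le_sup' Mf (Finset.empty_mem_powerset s))
  refine ⟨M, hMpos, ?_⟩
  intro x hx
  obtain ⟨s', hs's, hind, hx'⟩ := coneOf_carath s g x hx
  obtain ⟨t, ht0, htx⟩ := hx'
  set tm : ι → ℝ := fun i => if i ∈ s' then t i else 0 with htm
  have htm0 : ∀ i, 0 ≤ tm i := by
    intro i; rw [htm]; by_cases h : i ∈ s' <;> simp [h, ht0 i]
  have hsum' : ∑ j ∈ s', tm j • g j = x := by
    rw [htx]
    exact Finset.sum_congr rfl fun i hi => by simp [htm, hi]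
  have hsum : x = ∑ i ∈ s, tm i • g i := by
    rw [← hsum']
    refine Finset.sum_subset hs's ?_
    intro i _ hnis'
    simp [htm, hnis']
  have htmz : ∀ i, i ∉ s' → tm i = 0 := by
    intro i hi; simp [htm, hi]
  have hbd := (finIndep_bound hind).choose_spec.2 tm htmz
  refine ⟨tm, htm0, hsum, ?_⟩
  intro i
  have h1 : |tm i| ≤ Mf s' * ‖x‖ := by
    have h2 := hbd i
    rw [hsum'] at h2
    have hh : Mf s' = (finIndep_bound hind).choose := by simp only [hMf]; rw [dif_pos hind]
    rw [hh]
    exact h2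
  have h2 : Mf s' ≤ M := Finset.le_sup' Mf (Finset.mem_powerset.mpr hs's)
  calc tm i ≤ |tm i| := le_abs_self _
    _ ≤ Mf s' * ‖x‖ := h1
    _ ≤ M * ‖x‖ := mul_le_mul_of_nonneg_right h2 (norm_nonneg x)

/-- Farkas' lemma: the polar of a polyhedral cone is the finitely generated cone
on its defining normals. -/
lemma farkas (s : Finset ι) (g : ι → F) (u : F)
    (h : ∀ y : F, (∀ i ∈ s, ⟪g i, y⟫ ≤ 0) → ⟪u, y⟫ ≤ 0) : u ∈ coneOf s g := by
  by_contra hu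
  obtain ⟨f, r, hfa, hru⟩ :=
    geometric_hahn_banach_closed_point (convex_coneOf s g) (coneOf_closed s g) hu
  have hr0 : 0 < r := by
    have := hfa 0 (zero_mem_coneOf s g)
    simpa using this
  have hfneg : ∀ a ∈ coneOf s g, f a ≤ 0 := by
    intro a ha
    by_contra hfa'
    push_neg at hfa'
    have hta : ((r+1)/(f a)) • a ∈ coneOf s g :=
      smul_mem_coneOf ha (by positivity)
    have := hfa _ hta
    rw [map_smul] at this
    have : (r+1)/(f a) * f a < r := this
    rw [div_mul_cancel₀ _ (ne_of_gt hfa')] at this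
    linarith
  set y := (InnerProductSpace.toDual ℝ F).symm f with hy
  have hyval : ∀ z : F, ⟪y, z⟫ = f z := fun z => InnerProductSpace.toDual_symm_apply
  have hgy : ∀ i ∈ s, ⟪g i, y⟫ ≤ 0 := by
    intro i hi
    rw [real_inner_comm, hyval]
    exact hfneg _ (mem_coneOf_of_mem hi)
  have huy : ⟪u, y⟫ ≤ 0 := h y hgy
  rw [real_inner_comm, hyval] at huy
  linarith


/-- Inner product formula on `WithLp 2 (F × ℝ)`. -/
lemma prodl2_inner (x y : WithLp 2 (F × ℝ)) : ⟪x, y⟫ = ⟪x.fst, y.fst⟫ + x.snd * y.snd := by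
  rw [WithLp.prod_inner_apply]; norm_num [RCLike.inner_apply, mul_comm]

lemma prodl2_fst_sum {α : Type*} (s : Finset α) (f : α → WithLp 2 (F × ℝ)) :
    (∑ i ∈ s, f i).fst = ∑ i ∈ s, (f i).fst :=
  map_sum ((LinearMap.fst ℝ F ℝ).comp (WithLp.linearEquiv 2 ℝ (F × ℝ)).toLinearMap) f s

lemma prodl2_snd_sum {α : Type*} (s : Finset α) (f : α → WithLp 2 (F × ℝ)) :
    (∑ i ∈ s, f i).snd = ∑ i ∈ s, (f i).snd :=
  map_sum ((LinearMap.snd ℝ F ℝ).comp (WithLp.linearEquiv 2 ℝ (F × ℝ)).toLinearMap) f s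

/-- Homogenized Farkas lemma: a linear functional dominated, on a polyhedral cone,
by a max of linear functionals is a convex combination of the latter plus a conic
combination of the constraint normals. -/
lemma farkas_affine {ι κ : Type*} (P : Finset ι) (p : ι → F) (Q : Finset κ) (hQ : Q.Nonempty)
    (q : κ → F) (u : F)
    (h : ∀ y : F, (∀ k ∈ P, ⟪p k, y⟫ ≤ 0) → ⟪u, y⟫ ≤ Q.sup' hQ (fun j => ⟪q j, y⟫)) :
    ∃ (μ : κ → ℝ) (ν : ι → ℝ), (∀ j, 0 ≤ μ j) ∧ (∀ k, 0 ≤ ν k) ∧ (∑ j ∈ Q, μ j = 1) ∧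
      u = (∑ j ∈ Q, μ j • q j) + ∑ k ∈ P, ν k • p k := by
  classical
  let e : (F × ℝ) ≃ₗ[ℝ] WithLp 2 (F × ℝ) := (WithLp.linearEquiv 2 ℝ (F × ℝ)).symm
  let gh : ι ⊕ κ → WithLp 2 (F × ℝ) := Sum.elim (fun k => e (p k, 0)) (fun j => e (q j, -1))
  have key : e (u, -1) ∈ coneOf (P.disjSum Q) gh := by
    apply farkas
    intro y hy
    have hcon : ∀ k ∈ P, ⟪p k, y.fst⟫ ≤ 0 := by
      intro k hk
      have := hy (Sum.inl k) (Finset.inl_mem_disjSum.mpr hk)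
      have h2 : ⟪(gh (Sum.inl k)).fst, y.fst⟫ + (gh (Sum.inl k)).snd * y.snd ≤ 0 := by
        rw [← prodl2_inner]; exact this
      have h3 : ⟪p k, y.fst⟫ + (0:ℝ) * y.snd ≤ 0 := h2
      linarith
    have hsup : ∀ j ∈ Q, ⟪q j, y.fst⟫ ≤ y.snd := by
      intro j hj
      have := hy (Sum.inr j) (Finset.inr_mem_disjSum.mpr hj)
      have h2 : ⟪(gh (Sum.inr j)).fst, y.fst⟫ + (gh (Sum.inr j)).snd * y.snd ≤ 0 := by
        rw [← prodl2_inner]; exact this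
      have h3 : ⟪q j, y.fst⟫ + (-1) * y.snd ≤ 0 := h2
      linarith
    have hmain := h y.fst hcon
    have hsup' : Q.sup' hQ (fun j => ⟪q j, y.fst⟫) ≤ y.snd := Finset.sup'_le _ _ hsup
    have : ⟪(e (u,-1) : WithLp 2 (F × ℝ)).fst, y.fst⟫ + (e (u,-1) : WithLp 2 (F × ℝ)).snd * y.snd
        = ⟪u, y.fst⟫ + (-1) * y.snd := rfl
    rw [prodl2_inner, this]
    linarith
  obtain ⟨t, ht0, hte⟩ := key
  rw [Finset.sum_disjSum] at hte
  set FST := (LinearMap.fst ℝ F ℝ).comp (WithLp.linearEquiv 2 ℝ (F × ℝ)).toLinearMap with hFST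
  set SND := (LinearMap.snd ℝ F ℝ).comp (WithLp.linearEquiv 2 ℝ (F × ℝ)).toLinearMap with hSND
  refine ⟨fun j => t (Sum.inr j), fun k => t (Sum.inl k), fun j => ht0 _, fun k => ht0 _, ?_, ?_⟩
  · have h2 := congrArg (fun z => SND z) hte
    simp only [map_add, map_sum, map_smul] at h2
    have h3 : (-1 : ℝ) = ∑ x ∈ P, t (Sum.inl x) • (0:ℝ) + ∑ x ∈ Q, t (Sum.inr x) • (-1:ℝ) := h2
    simp only [smul_zero, smul_eq_mul, mul_zero, mul_neg_one, Finset.sum_const_zero, zero_add] at h3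
    have h4 : ∑ x ∈ Q, -t (Sum.inr x) = -∑ x ∈ Q, t (Sum.inr x) := by
      rw [Finset.sum_neg_distrib]
    rw [h4] at h3
    have : ∑ x ∈ Q, t (Sum.inr x) = 1 := by linarith
    simpa using this
  · have h2 := congrArg (fun z => FST z) hte
    simp only [map_add, map_sum, map_smul] at h2
    have h3 : u = ∑ x ∈ P, t (Sum.inl x) • p x + ∑ x ∈ Q, t (Sum.inr x) • q x := h2
    rw [h3, add_comm]

end FinDim


section BtconeLemmas

variable {G : Type*} [NormedAddCommGroup G] [NormedSpace ℝ G]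

lemma btcone_mono_local {Ω Ω' : Set G} {x : G} {ε : ℝ} (hε : 0 < ε)
    (h : ∀ p : G, dist p x < ε → (p ∈ Ω → p ∈ Ω')) : btcone Ω x ⊆ btcone Ω' x := by
  rintro w ⟨tseq, vseq, htpos, ht0, hv, hmem⟩
  have hb : Tendsto (fun n => ‖tseq n • vseq n‖) atTop (𝓝 0) := by
    have h1 : Tendsto (fun n => tseq n • vseq n) atTop (𝓝 ((0:ℝ) • w)) := ht0.smul hv
    rw [zero_smul] at h1
    simpa using h1.norm
  have hev : ∀ᶠ n in atTop, dist (x + tseq n • vseq n) x < ε := by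
    have h2 : ∀ᶠ n in atTop, ‖tseq n • vseq n‖ < ε := hb.eventually_lt_const hε
    refine h2.mono fun n hn => ?_
    rwa [dist_self_add_left]
  obtain ⟨N, hN⟩ := eventually_atTop.mp hev
  refine ⟨fun n => tseq (n + N), fun n => vseq (n + N), fun n => htpos _,
    ht0.comp (tendsto_add_atTop_nat N), hv.comp (tendsto_add_atTop_nat N), fun n => ?_⟩
  exact h _ (hN (n + N) (Nat.le_add_left N n)) (hmem (n + N))

lemma btcone_congr_local {Ω Ω' : Set G} {x : G} {ε : ℝ} (hε : 0 < ε)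
    (h : ∀ p : G, dist p x < ε → (p ∈ Ω ↔ p ∈ Ω')) : btcone Ω x = btcone Ω' x :=
  Set.Subset.antisymm (btcone_mono_local hε fun p hp => (h p hp).mp)
    (btcone_mono_local hε fun p hp => (h p hp).mpr)

lemma btcone_shift (Ω : Set G) (x : G) : btcone Ω x = btcone {q | x + q ∈ Ω} 0 := by
  ext w
  constructor
  · rintro ⟨tseq, vseq, htpos, ht0, hv, hmem⟩
    exact ⟨tseq, vseq, htpos, ht0, hv, fun n => by
      simpa using hmem n⟩
  · rintro ⟨tseq, vseq, htpos, ht0, hv, hmem⟩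
    refine ⟨tseq, vseq, htpos, ht0, hv, fun n => by
      have := hmem n
      simpa using this⟩

lemma btcone_closed_cone {C : Set G} (hC : IsClosed C)
    (hcone : ∀ c ∈ C, ∀ t : ℝ, 0 < t → t • c ∈ C) : btcone C 0 = C := by
  ext w
  constructor
  · rintro ⟨tseq, vseq, htpos, ht0, hv, hmem⟩
    have hvC : ∀ n, vseq n ∈ C := by
      intro n
      have h1 : tseq n • vseq n ∈ C := by simpa using hmem n
      have h2 := hcone _ h1 (tseq n)⁻¹ (inv_pos.mpr (htpos n))
      rwa [smul_smul, inv_mul_cancel₀ (ne_of_gt (htpos n)), one_smul] at h2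
    exact hC.mem_of_tendsto hv (Filter.Eventually.of_forall hvC)
  · intro hw
    refine ⟨fun n => 1 / ((n:ℝ) + 1), fun _ => w, fun n => by positivity,
      tendsto_one_div_add_atTop_nhds_zero_nat, tendsto_const_nhds, fun n => ?_⟩
    rw [zero_add]
    exact hcone w hw _ (by positivity)

end BtconeLemmas


section Poly

open scoped Classical

variable {F : Type*} [NormedAddCommGroup F] [InnerProductSpace ℝ F] [FiniteDimensional ℝ F]
variable {ι : Type*}

local notation "⟪" x ", " y "⟫" => @inner ℝ _ _ x y

/-- Pulling a nonnegative scalar out of a finite sup. -/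
lemma sup'_const_mul {s : Finset ι} (hs : s.Nonempty) (f : ι → ℝ) {t : ℝ} (ht : 0 ≤ t) :
    s.sup' hs (fun i => t * f i) = t * s.sup' hs f := by
  apply le_antisymm
  · exact Finset.sup'_le _ _ fun i hi =>
      mul_le_mul_of_nonneg_left (Finset.le_sup' f hi) ht
  · obtain ⟨i₀, hi₀, hval⟩ := Finset.exists_mem_eq_sup' hs f
    rw [hval]
    exact Finset.le_sup' (fun i => t * f i) hi₀

lemma continuous_finset_sup' {X : Type*} [TopologicalSpace X] {s : Finset ι} (hs : s.Nonempty)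
    {f : ι → X → ℝ} (hf : ∀ i, Continuous (f i)) :
    Continuous fun x => s.sup' hs fun i => f i x := by
  induction hs using Finset.Nonempty.cons_induction with
  | singleton a => simpa using hf a
  | cons a s ha hs ih =>
      have : (fun x => (Finset.cons a s ha).sup' (Finset.cons_nonempty ha) fun i => f i x)
          = fun x => max (f a x) (s.sup' hs fun i => f i x) := by
        funext x
        rw [Finset.sup'_cons hs]
      rw [this]
      exact (hf a).max ih

/-- Extraction of an affine `max`-representation from a polyhedral function. -/
lemma exists_representation (g : F → EReal) (hg : IsPolyhedralFn g) :
    ∃ (n : ℕ) (J J₀ : Finset (Fin n)) (hJ : J.Nonempty) (c v : Fin n → F) (d β : Fin n → ℝ),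
      (∀ x : F, (∀ k ∈ J₀, ⟪v k, x⟫ ≤ β k) →
        g x = ((J.sup' hJ fun i => ⟪c i, x⟫ + d i : ℝ) : EReal)) ∧
      (∀ x : F, ¬(∀ k ∈ J₀, ⟪v k, x⟫ ≤ β k) → g x = ⊤) := by
  classical
  obtain ⟨⟨z₀, hz₀⟩, hbot, hps⟩ := hg
  obtain ⟨n, b, β, hepi⟩ := hps
  set vv : Fin n → F := fun i => (InnerProductSpace.toDual ℝ F).symm
      (LinearMap.toContinuousLinearMap ((b i).comp (LinearMap.inl ℝ F ℝ))) with hvvdef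
  have hvv : ∀ i (x : F), ⟪vv i, x⟫ = b i (x, 0) := by
    intro i x
    simp only [hvvdef]
    exact InnerProductSpace.toDual_symm_apply
  set bb : Fin n → ℝ := fun i => b i (0, 1) with hbbdef
  have hbil : ∀ i (x : F) (r : ℝ), b i (x, r) = b i (x, 0) + r * bb i := by
    intro i x r
    have hds : ((x, r) : F × ℝ) = (x, 0) + r • ((0 : F), (1 : ℝ)) := by
      simp [Prod.ext_iff]
    rw [hds, map_add, map_smul]
    simp [hbbdef, smul_eq_mul]
  have hkey : ∀ (x : F) (r : ℝ), g x ≤ (r : EReal) ↔ ∀ i, ⟪vv i, x⟫ + r * bb i ≤ β i := by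
    intro x r
    have hmem := Set.ext_iff.mp hepi (x, r)
    simp only [Set.mem_setOf_eq] at hmem
    rw [hmem]
    constructor
    · intro h i
      have := h i
      rw [hbil i x r] at this
      rw [hvv]
      exact this
    · intro h i
      rw [hbil i x r]
      rw [← hvv]
      exact h i
  -- g z₀ is finite; its real bound
  have hz₀b : g z₀ ≠ ⊥ := hbot z₀
  set r₀ := (g z₀).toReal with hr₀def
  have hr₀ : g z₀ ≤ (r₀ : EReal) := by
    rw [hr₀def, EReal.coe_toReal hz₀ hz₀b]
  -- all slopes are nonpositive
  have hb0 : ∀ i, bb i ≤ 0 := by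
    intro i
    by_contra hpos
    push_neg at hpos
    set R := max r₀ ((β i - ⟪vv i, z₀⟫) / bb i + 1) with hRdef
    have hgR : g z₀ ≤ (R : EReal) :=
      le_trans hr₀ (EReal.coe_le_coe_iff.mpr (le_max_left _ _))
    have hcon := (hkey z₀ R).mp hgR i
    have hR2 : (β i - ⟪vv i, z₀⟫) / bb i + 1 ≤ R := le_max_right _ _
    have hq : (β i - ⟪vv i, z₀⟫) / bb i * bb i = β i - ⟪vv i, z₀⟫ :=
      div_mul_cancel₀ _ (ne_of_gt hpos)
    nlinarith [hcon, hR2, hpos, hq]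
  set J : Finset (Fin n) := Finset.univ.filter (fun i => bb i < 0) with hJdef
  set J₀ : Finset (Fin n) := Finset.univ.filter (fun i => bb i = 0) with hJ₀def
  have hJmem : ∀ i, i ∈ J ↔ bb i < 0 := by
    intro i; simp [hJdef]
  have hJ₀mem : ∀ i, i ∈ J₀ ↔ bb i = 0 := by
    intro i; simp [hJ₀def]
  have hJ : J.Nonempty := by
    by_contra hempty
    rw [Finset.not_nonempty_iff_eq_empty] at hempty
    have hall : ∀ i, bb i = 0 := by
      intro i
      rcases (hb0 i).lt_or_eq with h | h
      · have hmem : i ∈ J := (hJmem i).mpr h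
        rw [hempty] at hmem
        exact absurd hmem (Finset.notMem_empty i)
      · exact h
    have hforall : ∀ r : ℝ, g z₀ ≤ (r : EReal) := by
      intro r
      rw [hkey]
      intro i
      have h2 := (hkey z₀ r₀).mp hr₀ i
      rw [hall i] at h2 ⊢
      simpa using h2
    have hzb : g z₀ = ⊥ := by
      by_contra hne
      obtain ⟨x, hx1, hx2⟩ := EReal.lt_iff_exists_real_btwn.mp (Ne.bot_lt hne)
      exact absurd (hforall x) (not_le.mpr hx2)
    exact hbot z₀ hzb
  set c : Fin n → F := fun i => (-(bb i))⁻¹ • vv i with hcdef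
  set d : Fin n → ℝ := fun i => β i / bb i with hddef
  have haff : ∀ i, i ∈ J → ∀ x : F, ⟪c i, x⟫ + d i = (β i - ⟪vv i, x⟫) / bb i := by
    intro i hi x
    have hbi : bb i < 0 := (hJmem i).mp hi
    have hbi' : bb i ≠ 0 := ne_of_lt hbi
    rw [eq_div_iff hbi']
    simp only [hcdef, hddef]
    rw [real_inner_smul_left]
    field_simp
    ring
  have hDre : ∀ (x : F) (r : ℝ), g x ≤ (r : EReal) ↔
      ((∀ k ∈ J₀, ⟪vv k, x⟫ ≤ β k) ∧ (J.sup' hJ fun i => ⟪c i, x⟫ + d i) ≤ r) := by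
    intro x r
    rw [hkey]
    constructor
    · intro h
      constructor
      · intro k hk
        have h2 := h k
        rw [(hJ₀mem k).mp hk] at h2
        simpa using h2
      · refine Finset.sup'_le _ _ fun i hi => ?_
        rw [haff i hi x]
        have hbi : bb i < 0 := (hJmem i).mp hi
        have h2 := h i
        rw [div_le_iff_of_neg hbi]
        linarith
    · rintro ⟨hD, hsup⟩ i
      by_cases hbi : bb i < 0
      · have h2 : (β i - ⟪vv i, x⟫) / bb i ≤ r := by
          rw [← haff i ((hJmem i).mpr hbi) x]
          exact le_trans (Finset.le_sup' (fun i => ⟪c i, x⟫ + d i) ((hJmem i).mpr hbi)) hsup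
        rw [div_le_iff_of_neg hbi] at h2
        linarith
      · have hbi0 : bb i = 0 := le_antisymm (hb0 i) (not_lt.mp hbi)
        have h2 := hD i ((hJ₀mem i).mpr hbi0)
        rw [hbi0]
        simpa using h2
  refine ⟨n, J, J₀, hJ, c, vv, d, β, ?_, ?_⟩
  · intro x hD
    set fx := J.sup' hJ fun i => ⟪c i, x⟫ + d i with hfx
    have h1 : g x ≤ (fx : EReal) := (hDre x fx).mpr ⟨hD, le_rfl⟩
    have h2 : ¬ g x < (fx : EReal) := by
      intro hlt
      obtain ⟨q, hq1, hq2⟩ := EReal.lt_iff_exists_real_btwn.mp hlt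
      have := ((hDre x q).mp hq1.le).2
      rw [EReal.coe_lt_coe_iff] at hq2
      linarith
    exact le_antisymm h1 (not_lt.mp h2)
  · intro x hD
    by_contra hne
    have hxb : g x ≠ ⊥ := hbot x
    have : g x ≤ ((g x).toReal : EReal) := by rw [EReal.coe_toReal hne hxb]
    exact hD ((hDre x _).mp this).1

end Poly


section Core

open scoped Classical

variable {F : Type*} [NormedAddCommGroup F] [InnerProductSpace ℝ F] [FiniteDimensional ℝ F]
variable {ι : Type*} [Fintype ι]

local notation "⟪" x ", " y "⟫" => @inner ℝ _ _ x y

/-- The affine max-function. -/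
def pf (J : Finset ι) (hJ : J.Nonempty) (c : ι → F) (d : ι → ℝ) (x : F) : ℝ :=
  J.sup' hJ fun i => ⟪c i, x⟫ + d i

/-- The polyhedral domain. -/
def pD (J₀ : Finset ι) (v : ι → F) (β : ι → ℝ) : Set F := {x | ∀ k ∈ J₀, ⟪v k, x⟫ ≤ β k}

/-- Active affine pieces at `zb`. -/
def pA (J : Finset ι) (hJ : J.Nonempty) (c : ι → F) (d : ι → ℝ) (zb : F) : Finset ι :=
  J.filter fun i => ⟪c i, zb⟫ + d i = pf J hJ c d zb

lemma pf_ge (J : Finset ι) (hJ : J.Nonempty) (c : ι → F) (d : ι → ℝ) {i : ι} (hi : i ∈ J)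
    (x : F) : ⟪c i, x⟫ + d i ≤ pf J hJ c d x :=
  Finset.le_sup' (fun i => ⟪c i, x⟫ + d i) hi

lemma pA_ne (J : Finset ι) (hJ : J.Nonempty) (c : ι → F) (d : ι → ℝ) (zb : F) :
    (pA J hJ c d zb).Nonempty := by
  obtain ⟨i, hi, hv⟩ := Finset.exists_mem_eq_sup' hJ (fun i => ⟪c i, zb⟫ + d i)
  exact ⟨i, Finset.mem_filter.mpr ⟨hi, hv.symm⟩⟩

/-- Active constraints at `zb`. -/
def pA0 (J₀ : Finset ι) (v : ι → F) (β : ι → ℝ) (zb : F) : Finset ι :=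
  J₀.filter fun k => ⟪v k, zb⟫ = β k

/-- Tangent directions of the domain at `zb`. -/
def pT (J₀ : Finset ι) (v : ι → F) (β : ι → ℝ) (zb : F) : Set F :=
  {w | ∀ k ∈ pA0 J₀ v β zb, ⟪v k, w⟫ ≤ 0}

/-- The local max function at `zb`. -/
def pM (J : Finset ι) (hJ : J.Nonempty) (c : ι → F) (d : ι → ℝ) (zb : F) (w : F) : ℝ :=
  (pA J hJ c d zb).sup' (pA_ne J hJ c d zb) fun i => ⟪c i, w⟫

/-- The explicit critical cone. -/
def pK (J : Finset ι) (hJ : J.Nonempty) (c : ι → F) (d : ι → ℝ) (J₀ : Finset ι) (v : ι → F)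
    (β : ι → ℝ) (zb lb : F) : Set F :=
  {w | w ∈ pT J₀ v β zb ∧ ∀ i ∈ pA J hJ c d zb, ⟪c i, w⟫ ≤ ⟪lb, w⟫}

variable (J : Finset ι) (hJ : J.Nonempty) (c : ι → F) (d : ι → ℝ) (J₀ : Finset ι) (v : ι → F)
  (β : ι → ℝ) (zb lb : F)

lemma pM_ge {i : ι} (hi : i ∈ pA J hJ c d zb) (w : F) : ⟪c i, w⟫ ≤ pM J hJ c d zb w :=
  Finset.le_sup' (fun i => ⟪c i, w⟫) hi

lemma pM_le {w : F} {a : ℝ} (h : ∀ i ∈ pA J hJ c d zb, ⟪c i, w⟫ ≤ a) :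
    pM J hJ c d zb w ≤ a := Finset.sup'_le _ _ h

lemma pM_smul {t : ℝ} (ht : 0 ≤ t) (w : F) :
    pM J hJ c d zb (t • w) = t * pM J hJ c d zb w := by
  unfold pM
  rw [← sup'_const_mul _ (fun i => ⟪c i, w⟫) ht]
  exact Finset.sup'_congr _ rfl fun i _ => real_inner_smul_right _ _ _

lemma pM_zero : pM J hJ c d zb 0 = 0 := by
  have h := pM_smul J hJ c d zb (le_refl (0:ℝ)) 0
  rw [zero_smul] at h
  linarith

lemma pT_zero : (0 : F) ∈ pT J₀ v β zb := by
  intro k _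
  rw [inner_zero_right]

lemma pT_smul {t : ℝ} (ht : 0 ≤ t) {w : F} (hw : w ∈ pT J₀ v β zb) :
    t • w ∈ pT J₀ v β zb := by
  intro k hk
  rw [real_inner_smul_right]
  exact mul_nonpos_iff.mpr (Or.inl ⟨ht, hw k hk⟩)

lemma comb_eq (t : ℝ) (x y : F) : x + t • (y - x) = (1 - t) • x + t • y := by
  rw [smul_sub, sub_smul, one_smul]
  abel

lemma pT_comb {t : ℝ} (ht : 0 ≤ t) (ht1 : t ≤ 1) {x y : F} (hx : x ∈ pT J₀ v β zb)
    (hy : y ∈ pT J₀ v β zb) : (1 - t) • x + t • y ∈ pT J₀ v β zb := by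
  intro k hk
  rw [inner_add_right, real_inner_smul_right, real_inner_smul_right]
  have h1 := hx k hk
  have h2 := hy k hk
  nlinarith

lemma pD_comb {t : ℝ} (ht : 0 ≤ t) (ht1 : t ≤ 1) {x y : F} (hx : x ∈ pD J₀ v β)
    (hy : y ∈ pD J₀ v β) : (1 - t) • x + t • y ∈ pD J₀ v β := by
  intro k hk
  rw [inner_add_right, real_inner_smul_right, real_inner_smul_right]
  have h1 := hx k hk
  have h2 := hy k hk
  nlinarith

lemma pf_comb {t : ℝ} (ht : 0 ≤ t) (ht1 : t ≤ 1) (x y : F) :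
    pf J hJ c d ((1 - t) • x + t • y) ≤ (1 - t) * pf J hJ c d x + t * pf J hJ c d y := by
  refine Finset.sup'_le _ _ fun i hi => ?_
  have h1 : ⟪c i, x⟫ + d i ≤ pf J hJ c d x := pf_ge J hJ c d hi x
  have h2 : ⟪c i, y⟫ + d i ≤ pf J hJ c d y := pf_ge J hJ c d hi y
  rw [inner_add_right, real_inner_smul_right, real_inner_smul_right]
  nlinarith

lemma pM_comb {t : ℝ} (ht : 0 ≤ t) (ht1 : t ≤ 1) (x y : F) :
    pM J hJ c d zb ((1 - t) • x + t • y)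
      ≤ (1 - t) * pM J hJ c d zb x + t * pM J hJ c d zb y := by
  refine Finset.sup'_le _ _ fun i hi => ?_
  have h1 : ⟪c i, x⟫ ≤ pM J hJ c d zb x := pM_ge J hJ c d zb hi x
  have h2 : ⟪c i, y⟫ ≤ pM J hJ c d zb y := pM_ge J hJ c d zb hi y
  rw [inner_add_right, real_inner_smul_right, real_inner_smul_right]
  nlinarith

/-- Local structure of a polyhedral pair around a domain point. -/
lemma loc_struct (hzbD : zb ∈ pD J₀ v β) :
    ∃ δ : ℝ, 0 < δ ∧ ∀ y : F, ‖y‖ < δ →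
      ((zb + y ∈ pD J₀ v β ↔ y ∈ pT J₀ v β zb) ∧
        pf J hJ c d (zb + y) = pf J hJ c d zb + pM J hJ c d zb y) := by
  classical
  set Cb : ℝ := J.sup' hJ fun i => ‖c i‖ with hCbdef
  have hCb : 0 ≤ Cb := by
    obtain ⟨i, hi⟩ := hJ
    exact le_trans (norm_nonneg (c i)) (Finset.le_sup' (fun i => ‖c i‖) hi)
  set gapv : ι → ℝ := fun k => (β k - ⟪v k, zb⟫) / (‖v k‖ + 1) with hgapv
  set gapc : ι → ℝ := fun i => (pf J hJ c d zb - (⟪c i, zb⟫ + d i)) / (2 * Cb + 1) with hgapc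
  set cand : Finset ℝ := insert 1
    (((J₀ \ pA0 J₀ v β zb).image gapv) ∪ ((J \ pA J hJ c d zb).image gapc)) with hcand
  have hcne : cand.Nonempty := ⟨1, Finset.mem_insert_self _ _⟩
  set δ := cand.min' hcne with hδdef
  have hδpos : 0 < δ := by
    rw [hδdef, Finset.lt_min'_iff]
    intro y hy
    rw [hcand] at hy
    rcases Finset.mem_insert.mp hy with h | h
    · rw [h]; norm_num
    · rcases Finset.mem_union.mp h with h | h
      · obtain ⟨k, hk, rfl⟩ := Finset.mem_image.mp h
        obtain ⟨hkJ₀, hknA⟩ := Finset.mem_sdiff.mp hk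
        have hle := hzbD k hkJ₀
        have hne : ⟪v k, zb⟫ ≠ β k := by
          intro he
          exact hknA (Finset.mem_filter.mpr ⟨hkJ₀, he⟩)
        have : ⟪v k, zb⟫ < β k := lt_of_le_of_ne hle hne
        apply div_pos (by linarith) (by positivity)
      · obtain ⟨i, hi, rfl⟩ := Finset.mem_image.mp h
        obtain ⟨hiJ, hinA⟩ := Finset.mem_sdiff.mp hi
        have hle : ⟪c i, zb⟫ + d i ≤ pf J hJ c d zb := pf_ge J hJ c d hiJ zb
        have hne : ⟪c i, zb⟫ + d i ≠ pf J hJ c d zb := by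
          intro he
          exact hinA (Finset.mem_filter.mpr ⟨hiJ, he⟩)
        have : ⟪c i, zb⟫ + d i < pf J hJ c d zb := lt_of_le_of_ne hle hne
        apply div_pos (by linarith) (by positivity)
  refine ⟨δ, hδpos, fun y hy => ⟨⟨?_, ?_⟩, ?_⟩⟩
  · -- membership → tangent cone
    intro hmem k hk
    obtain ⟨hkJ₀, hkeq⟩ := Finset.mem_filter.mp hk
    have := hmem k hkJ₀
    rw [inner_add_right, hkeq] at this
    linarith
  · -- tangent cone → membership
    intro hT k hk
    by_cases hact : k ∈ pA0 J₀ v β zb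
    · have h1 := hT k hact
      have h2 : ⟪v k, zb⟫ = β k := (Finset.mem_filter.mp hact).2
      rw [inner_add_right, h2]
      linarith
    · have hksd : k ∈ J₀ \ pA0 J₀ v β zb := Finset.mem_sdiff.mpr ⟨hk, hact⟩
      have hδle : δ ≤ gapv k := Finset.min'_le _ _ (by
        rw [hcand]
        exact Finset.mem_insert_of_mem (Finset.mem_union_left _ (Finset.mem_image_of_mem _ hksd)))
      have hlt : ⟪v k, zb⟫ < β k := by
        have hle := hzbD k hk
        have hne : ⟪v k, zb⟫ ≠ β k := fun he => hact (Finset.mem_filter.mpr ⟨hk, he⟩)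
        exact lt_of_le_of_ne hle hne
      have hinle : ⟪v k, y⟫ ≤ ‖v k‖ * ‖y‖ := real_inner_le_norm _ _
      have hq : gapv k * (‖v k‖ + 1) = β k - ⟪v k, zb⟫ := by
        rw [hgapv]
        exact div_mul_cancel₀ _ (by positivity)
      rw [inner_add_right]
      nlinarith [norm_nonneg (v k), norm_nonneg y, hy, hδle, hinle, hq]
  · -- value formula
    apply le_antisymm
    · refine Finset.sup'_le _ _ fun i hi => ?_
      rw [inner_add_right]
      by_cases hact : i ∈ pA J hJ c d zb
      · have h1 : ⟪c i, zb⟫ + d i = pf J hJ c d zb := (Finset.mem_filter.mp hact).2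
        have h2 : ⟪c i, y⟫ ≤ pM J hJ c d zb y := pM_ge J hJ c d zb hact y
        linarith
      · have hisd : i ∈ J \ pA J hJ c d zb := Finset.mem_sdiff.mpr ⟨hi, hact⟩
        have hδle : δ ≤ gapc i := Finset.min'_le _ _ (by
          rw [hcand]
          exact Finset.mem_insert_of_mem
            (Finset.mem_union_right _ (Finset.mem_image_of_mem _ hisd)))
        obtain ⟨j₀, hj₀⟩ := pA_ne J hJ c d zb
        have hj₀M : ⟪c j₀, y⟫ ≤ pM J hJ c d zb y := pM_ge J hJ c d zb hj₀ y
        have hci : ‖c i‖ ≤ Cb := Finset.le_sup' (fun i => ‖c i‖) hi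
        have hcj : ‖c j₀‖ ≤ Cb :=
          Finset.le_sup' (fun i => ‖c i‖) (Finset.mem_of_mem_filter j₀ hj₀)
        have hin1 : ⟪c i, y⟫ ≤ ‖c i‖ * ‖y‖ := real_inner_le_norm _ _
        have hin2 : -(‖c j₀‖ * ‖y‖) ≤ ⟪c j₀, y⟫ := neg_le_of_abs_le (abs_real_inner_le_norm _ _)
        have hq : gapc i * (2 * Cb + 1) = pf J hJ c d zb - (⟪c i, zb⟫ + d i) := by
          rw [hgapc]
          exact div_mul_cancel₀ _ (by positivity)
        have hgap : ⟪c i, zb⟫ + d i ≤ pf J hJ c d zb := pf_ge J hJ c d hi zb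
        have hyn : 0 ≤ ‖y‖ := norm_nonneg y
        nlinarith [hy, hδle, hq, hin1, hin2, hj₀M, hci, hcj, hCb]
    · have key : ∀ i ∈ pA J hJ c d zb,
          ⟪c i, y⟫ ≤ pf J hJ c d (zb + y) - pf J hJ c d zb := by
        intro i hi
        obtain ⟨hiJ, hieq⟩ := Finset.mem_filter.mp hi
        have h1 : ⟪c i, zb + y⟫ + d i ≤ pf J hJ c d (zb + y) := pf_ge J hJ c d hiJ (zb + y)
        rw [inner_add_right] at h1
        linarith
      have h2 : pM J hJ c d zb y ≤ pf J hJ c d (zb + y) - pf J hJ c d zb :=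
        pM_le J hJ c d zb key
      linarith

end Core


section Sub

open scoped Classical

variable {F : Type*} [NormedAddCommGroup F] [InnerProductSpace ℝ F] [FiniteDimensional ℝ F]
variable {ι : Type*} [Fintype ι]

local notation "⟪" x ", " y "⟫" => @inner ℝ _ _ x y

variable (J : Finset ι) (hJ : J.Nonempty) (c : ι → F) (d : ι → ℝ) (J₀ : Finset ι) (v : ι → F)
  (β : ι → ℝ) (zb lb : F) (g : F → EReal)

lemma zb_mem_pD (hrepT : ∀ x ∉ pD J₀ v β, g x = ⊤) (z₀ : F) (hz₀ : g z₀ ≠ ⊤)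
    (hl : lb ∈ subdiff g zb) : zb ∈ pD J₀ v β := by
  by_contra hne
  have h1 := hl z₀
  rw [hrepT zb hne, EReal.top_add_coe] at h1
  exact hz₀ (top_le_iff.mp h1)

lemma hge_lemma (hrepD : ∀ x ∈ pD J₀ v β, g x = ((pf J hJ c d x : ℝ) : EReal))
    (hzbD : zb ∈ pD J₀ v β) {δ : ℝ} (hδ0 : 0 < δ)
    (hδ : ∀ y : F, ‖y‖ < δ → ((zb + y ∈ pD J₀ v β ↔ y ∈ pT J₀ v β zb) ∧
        pf J hJ c d (zb + y) = pf J hJ c d zb + pM J hJ c d zb y))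
    (hl : lb ∈ subdiff g zb) :
    ∀ w ∈ pT J₀ v β zb, ⟪lb, w⟫ ≤ pM J hJ c d zb w := by
  intro w hw
  set t := δ / (2 * (‖w‖ + 1)) with htdef
  have ht : 0 < t := by rw [htdef]; positivity
  have hq : δ / (2*(‖w‖+1)) * (2*(‖w‖+1)) = δ := div_mul_cancel₀ _ (by positivity)
  have htw : ‖t • w‖ < δ := by
    rw [norm_smul, Real.norm_eq_abs, abs_of_pos ht]
    nlinarith [norm_nonneg w, hδ0]
  obtain ⟨hmem, hval⟩ := hδ (t • w) htw
  have htwT : t • w ∈ pT J₀ v β zb := pT_smul J₀ v β zb ht.le hw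
  have hx : zb + t • w ∈ pD J₀ v β := hmem.mpr htwT
  have h1 := hl (zb + t • w)
  rw [hrepD _ hx, hrepD _ hzbD, hval, add_sub_cancel_left,
    pM_smul J hJ c d zb ht.le, real_inner_smul_right, ← EReal.coe_add,
    EReal.coe_le_coe_iff] at h1
  nlinarith [h1, ht]

lemma subderiv_eq (hrepD : ∀ x ∈ pD J₀ v β, g x = ((pf J hJ c d x : ℝ) : EReal))
    (hrepT : ∀ x ∉ pD J₀ v β, g x = ⊤)
    (hzbD : zb ∈ pD J₀ v β) {δ : ℝ} (hδ0 : 0 < δ)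
    (hδ : ∀ y : F, ‖y‖ < δ → ((zb + y ∈ pD J₀ v β ↔ y ∈ pT J₀ v β zb) ∧
        pf J hJ c d (zb + y) = pf J hJ c d zb + pM J hJ c d zb y)) (w : F) :
    subderiv g zb w =
      if w ∈ pT J₀ v β zb then ((pM J hJ c d zb w : ℝ) : EReal) else ⊤ := by
  classical
  haveI : (𝓝[>] (0:ℝ)).NeBot := nhdsGT_neBot 0
  set Φ := (𝓝[>] (0:ℝ)) ×ˢ 𝓝 w with hΦ
  haveI hnb : Φ.NeBot := by rw [hΦ]; exact Filter.prod_neBot.mpr ⟨inferInstance, inferInstance⟩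
  set ψ : F → EReal :=
    fun w' => if w' ∈ pT J₀ v β zb then ((pM J hJ c d zb w' : ℝ) : EReal) else ⊤ with hψ
  have hEq : ∀ᶠ p : ℝ × F in Φ,
      (g (zb + p.1 • p.2) - g zb) * (((p.1)⁻¹ : ℝ) : EReal) = ψ p.2 := by
    have ev₁ : ∀ᶠ t : ℝ in 𝓝[>] (0:ℝ), t ∈ Set.Ioo 0 (δ / (‖w‖ + 1)) :=
      Ioo_mem_nhdsGT_of_mem ⟨le_refl 0, by positivity⟩
    have ev₂ : ∀ᶠ w' : F in 𝓝 w, ‖w'‖ < ‖w‖ + 1 :=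
      (continuous_norm.tendsto w).eventually_lt_const (by linarith)
    rw [hΦ]
    refine ((ev₁.prod_inl _).and (ev₂.prod_inr _)).mono ?_
    rintro ⟨t, w'⟩ ⟨⟨ht0, htu⟩, hw'⟩
    have hδq : δ/(‖w‖+1) * (‖w‖+1) = δ := div_mul_cancel₀ _ (by positivity)
    have hts : ‖t • w'‖ < δ := by
      rw [norm_smul, Real.norm_eq_abs, abs_of_pos ht0]
      nlinarith [norm_nonneg w', norm_nonneg w, ht0]
    obtain ⟨hmem, hval⟩ := hδ (t • w') hts
    have hgzb : g zb = ((pf J hJ c d zb : ℝ) : EReal) := hrepD _ hzbD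
    by_cases hw'T : w' ∈ pT J₀ v β zb
    · have h2 : t • w' ∈ pT J₀ v β zb := pT_smul J₀ v β zb ht0.le hw'T
      have h3 : zb + t • w' ∈ pD J₀ v β := hmem.mpr h2
      rw [hrepD _ h3, hval, hgzb, pM_smul J hJ c d zb ht0.le,
        ← EReal.coe_sub, ← EReal.coe_mul]
      have hred : (pf J hJ c d zb + t * pM J hJ c d zb w' - pf J hJ c d zb) * t⁻¹
          = pM J hJ c d zb w' := by
        field_simp
        ring
      rw [hred]
      simp only [hψ]
      rw [if_pos hw'T]
    · have h2 : t • w' ∉ pT J₀ v β zb := by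
        intro hc
        apply hw'T
        intro k hk
        have h5 := hc k hk
        rw [real_inner_smul_right] at h5
        nlinarith [h5, ht0]
      have h3 : zb + t • w' ∉ pD J₀ v β := fun hc => h2 (hmem.mp hc)
      rw [hrepT _ h3, hgzb, EReal.top_sub_coe,
        EReal.top_mul_coe_of_pos (inv_pos.mpr ht0)]
      simp only [hψ]
      rw [if_neg hw'T]
  have hlim : subderiv g zb w = Filter.liminf (fun p : ℝ × F => ψ p.2) Φ := by
    unfold subderiv
    exact Filter.liminf_congr hEq
  rw [hlim]
  show Filter.liminf (fun p : ℝ × F => ψ p.2) Φ = ψ w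
  by_cases hwT : w ∈ pT J₀ v β zb
  · apply le_antisymm
    · apply liminf_le_of_frequently_le'
      rw [Filter.frequently_iff]
      intro U hU
      rw [hΦ, Filter.mem_prod_iff] at hU
      obtain ⟨s₁, hs₁, s₂, hs₂, hsub⟩ := hU
      obtain ⟨t₀, ht₀⟩ := Filter.nonempty_of_mem hs₁
      exact ⟨(t₀, w), hsub ⟨ht₀, mem_of_mem_nhds hs₂⟩, le_rfl⟩
    · have hψge : ∀ p : ℝ × F, ((pM J hJ c d zb p.2 : ℝ) : EReal) ≤ ψ p.2 := by
        intro p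
        simp only [hψ]
        split
        · exact le_rfl
        · exact le_top
      have hMcont : Continuous (pM J hJ c d zb) := by
        unfold pM
        exact continuous_finset_sup' _ fun i => continuous_const.inner continuous_id
      have htend : Filter.Tendsto (fun p : ℝ × F => ((pM J hJ c d zb p.2 : ℝ) : EReal)) Φ
          (𝓝 ((pM J hJ c d zb w : ℝ) : EReal)) := by
        apply Filter.Tendsto.comp (continuous_coe_real_ereal.tendsto _)
        apply Filter.Tendsto.comp (hMcont.tendsto w)
        rw [hΦ]; exact Filter.tendsto_snd
      have h4 : Filter.liminf (fun p : ℝ × F => ((pM J hJ c d zb p.2 : ℝ) : EReal)) Φ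
          = ((pM J hJ c d zb w : ℝ) : EReal) := htend.liminf_eq
      calc ψ w = ((pM J hJ c d zb w : ℝ) : EReal) := by simp only [hψ]; rw [if_pos hwT]
        _ = Filter.liminf (fun p : ℝ × F => ((pM J hJ c d zb p.2 : ℝ) : EReal)) Φ := h4.symm
        _ ≤ Filter.liminf (fun p : ℝ × F => ψ p.2) Φ :=
            Filter.liminf_le_liminf (Filter.Eventually.of_forall hψge)
  · obtain ⟨k, hk, hkpos⟩ : ∃ k ∈ pA0 J₀ v β zb, 0 < ⟪v k, w⟫ := by
      by_contra hc
      push_neg at hc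
      exact hwT fun k hk => hc k hk
    have ev3 : ∀ᶠ w' : F in 𝓝 w, 0 < ⟪v k, w'⟫ :=
      ((continuous_const.inner continuous_id).tendsto w).eventually_const_lt hkpos
    have ev4 : ∀ᶠ p : ℝ × F in Φ, ψ p.2 = ⊤ := by
      have hsnd : Filter.Tendsto (Prod.snd : ℝ × F → F) Φ (𝓝 w) := by
        rw [hΦ]; exact Filter.tendsto_snd
      refine (hsnd.eventually ev3).mono ?_
      intro p hp
      simp only [hψ]
      rw [if_neg]
      intro hc
      exact absurd (hc k hk) (not_le.mpr hp)
    rw [Filter.liminf_congr ev4, Filter.liminf_const]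
    simp only [hψ]
    rw [if_neg hwT]

lemma Kcone_eq (hrepD : ∀ x ∈ pD J₀ v β, g x = ((pf J hJ c d x : ℝ) : EReal))
    (hrepT : ∀ x ∉ pD J₀ v β, g x = ⊤)
    (hzbD : zb ∈ pD J₀ v β) {δ : ℝ} (hδ0 : 0 < δ)
    (hδ : ∀ y : F, ‖y‖ < δ → ((zb + y ∈ pD J₀ v β ↔ y ∈ pT J₀ v β zb) ∧
        pf J hJ c d (zb + y) = pf J hJ c d zb + pM J hJ c d zb y))
    (hl : lb ∈ subdiff g zb) :
    Kcone g zb lb = pK J hJ c d J₀ v β zb lb := by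
  have hge := hge_lemma J hJ c d J₀ v β zb lb g hrepD hzbD hδ0 hδ hl
  ext w
  show subderiv g zb w = ((⟪lb, w⟫ : ℝ) : EReal) ↔ _
  rw [subderiv_eq J hJ c d J₀ v β zb g hrepD hrepT hzbD hδ0 hδ w]
  by_cases hwT : w ∈ pT J₀ v β zb
  · rw [if_pos hwT]
    constructor
    · intro he
      rw [EReal.coe_eq_coe_iff] at he
      exact ⟨hwT, fun i hi => le_trans (pM_ge J hJ c d zb hi w) (le_of_eq he)⟩
    · rintro ⟨_, hle⟩
      rw [EReal.coe_eq_coe_iff]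
      exact le_antisymm (pM_le J hJ c d zb hle) (hge w hwT)
  · rw [if_neg hwT]
    constructor
    · intro he
      exact absurd he (by simp)
    · rintro ⟨hwT', _⟩
      exact absurd hwT' hwT

end Sub


section Red

open scoped Classical

variable {F : Type*} [NormedAddCommGroup F] [InnerProductSpace ℝ F] [FiniteDimensional ℝ F]
variable {ι : Type*} [Fintype ι]

local notation "⟪" x ", " y "⟫" => @inner ℝ _ _ x y

variable (J : Finset ι) (hJ : J.Nonempty) (c : ι → F) (d : ι → ℝ) (J₀ : Finset ι) (v : ι → F)
  (β : ι → ℝ) (zb lb : F) (g : F → EReal)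

lemma sub_iff (hrepD : ∀ x ∈ pD J₀ v β, g x = ((pf J hJ c d x : ℝ) : EReal))
    (hrepT : ∀ x ∉ pD J₀ v β, g x = ⊤)
    (hzbD : zb ∈ pD J₀ v β) {δ : ℝ} (hδ0 : 0 < δ)
    (hδ : ∀ y : F, ‖y‖ < δ → ((zb + y ∈ pD J₀ v β ↔ y ∈ pT J₀ v β zb) ∧
        pf J hJ c d (zb + y) = pf J hJ c d zb + pM J hJ c d zb y))
    {w : F} (hw : ‖w‖ < δ/2) (u : F) :
    (lb + u) ∈ subdiff g (zb + w) ↔ (w ∈ pT J₀ v β zb ∧ ∀ y ∈ pT J₀ v β zb,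
      pM J hJ c d zb w - ⟪lb + u, w⟫ ≤ pM J hJ c d zb y - ⟪lb + u, y⟫) := by
  have hwδ : ‖w‖ < δ := by linarith
  constructor
  · intro hsub
    have hwT : w ∈ pT J₀ v β zb := by
      by_contra hc
      have hnD : zb + w ∉ pD J₀ v β := fun hmem => hc ((hδ w hwδ).1.mp hmem)
      have h1 := hsub zb
      rw [hrepT _ hnD, hrepD _ hzbD, EReal.top_add_coe] at h1
      exact absurd (top_le_iff.mp h1) (by simp)
    have hzwD : zb + w ∈ pD J₀ v β := (hδ w hwδ).1.mpr hwT
    have hval : pf J hJ c d (zb + w) = pf J hJ c d zb + pM J hJ c d zb w := (hδ w hwδ).2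
    have step1 : ∀ y' ∈ pT J₀ v β zb, ‖y'‖ < δ →
        pM J hJ c d zb w - ⟪lb + u, w⟫ ≤ pM J hJ c d zb y' - ⟪lb + u, y'⟫ := by
      intro y' hy'T hy'δ
      have hyD : zb + y' ∈ pD J₀ v β := (hδ y' hy'δ).1.mpr hy'T
      have h1 := hsub (zb + y')
      rw [hrepD _ hyD, hrepD _ hzwD, (hδ y' hy'δ).2, hval] at h1
      have h2 : (zb + y') - (zb + w) = y' - w := by abel
      rw [h2, inner_sub_right, ← EReal.coe_add, EReal.coe_le_coe_iff] at h1
      linarith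
    refine ⟨hwT, fun y hyT => ?_⟩
    set t := min (1/2 : ℝ) (δ / (2 * (‖y - w‖ + 1))) with htdef
    have ht0 : 0 < t := lt_min (by norm_num) (by positivity)
    have ht1 : t ≤ 1 := le_trans (min_le_left _ _) (by norm_num)
    set yt := w + t • (y - w) with hyt
    have hytT : yt ∈ pT J₀ v β zb := by
      rw [hyt, comb_eq]
      exact pT_comb J₀ v β zb ht0.le ht1 hwT hyT
    have hytδ : ‖yt‖ < δ := by
      have h3 : ‖yt‖ ≤ ‖w‖ + t * ‖y - w‖ := by
        rw [hyt]
        refine le_trans (norm_add_le _ _) ?_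
        rw [norm_smul, Real.norm_eq_abs, abs_of_pos ht0]
      have h4 : t ≤ δ / (2 * (‖y - w‖ + 1)) := min_le_right _ _
      have hq : δ / (2 * (‖y - w‖ + 1)) * (2 * (‖y - w‖ + 1)) = δ :=
        div_mul_cancel₀ _ (by positivity)
      nlinarith [norm_nonneg (y - w), hw, ht0]
    have h5 := step1 yt hytT hytδ
    have h6 : pM J hJ c d zb yt ≤ (1 - t) * pM J hJ c d zb w + t * pM J hJ c d zb y := by
      rw [hyt, comb_eq]
      exact pM_comb J hJ c d zb ht0.le ht1 w y
    have h7 : ⟪lb + u, yt⟫ = (1 - t) * ⟪lb + u, w⟫ + t * ⟪lb + u, y⟫ := by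
      rw [hyt, comb_eq, inner_add_right, real_inner_smul_right, real_inner_smul_right]
    nlinarith [h5, h6, h7, ht0]
  · rintro ⟨hwT, hmin⟩
    have hzwD : zb + w ∈ pD J₀ v β := (hδ w hwδ).1.mpr hwT
    have hval : pf J hJ c d (zb + w) = pf J hJ c d zb + pM J hJ c d zb w := (hδ w hwδ).2
    have small : ∀ x ∈ pD J₀ v β, ‖x - zb‖ < δ →
        pf J hJ c d zb + pM J hJ c d zb w + ⟪lb + u, x - (zb + w)⟫ ≤ pf J hJ c d x := by
      intro x hxD hxδ
      set y := x - zb with hydef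
      have hxy : zb + y = x := by rw [hydef]; abel
      have hyT : y ∈ pT J₀ v β zb := (hδ y hxδ).1.mp (by rw [hxy]; exact hxD)
      have hyval : pf J hJ c d x = pf J hJ c d zb + pM J hJ c d zb y := by
        rw [← hxy]
        exact (hδ y hxδ).2
      have h1 := hmin y hyT
      have h2 : x - (zb + w) = y - w := by rw [hydef]; abel
      rw [h2, inner_sub_right, hyval]
      linarith
    have glob : ∀ x ∈ pD J₀ v β,
        pf J hJ c d zb + pM J hJ c d zb w + ⟪lb + u, x - (zb + w)⟫ ≤ pf J hJ c d x := by
      intro x hxD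
      set s := x - (zb + w) with hsdef
      set t := min 1 (δ / (2 * (‖s‖ + 1))) with htdef
      have ht0 : 0 < t := lt_min one_pos (by positivity)
      have ht1 : t ≤ 1 := min_le_left _ _
      set xt := (zb + w) + t • s with hxt
      have hxtc : xt = (1 - t) • (zb + w) + t • x := by
        rw [hxt, hsdef, comb_eq]
      have hxtD : xt ∈ pD J₀ v β := by
        rw [hxtc]
        exact pD_comb J₀ v β ht0.le ht1 hzwD hxD
      have hxtδ : ‖xt - zb‖ < δ := by
        have h3 : xt - zb = w + t • s := by rw [hxt]; abel
        have h4 : ‖xt - zb‖ ≤ ‖w‖ + t * ‖s‖ := by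
          rw [h3]
          refine le_trans (norm_add_le _ _) ?_
          rw [norm_smul, Real.norm_eq_abs, abs_of_pos ht0]
        have h5 : t ≤ δ / (2 * (‖s‖ + 1)) := min_le_right _ _
        have hq : δ / (2 * (‖s‖ + 1)) * (2 * (‖s‖ + 1)) = δ := div_mul_cancel₀ _ (by positivity)
        nlinarith [norm_nonneg s, hw, ht0]
      have h6 := small xt hxtD hxtδ
      have h7 : xt - (zb + w) = t • s := by rw [hxt]; abel
      rw [h7, real_inner_smul_right] at h6
      have h8 : pf J hJ c d xt ≤ (1 - t) * pf J hJ c d (zb + w) + t * pf J hJ c d x := by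
        rw [hxtc]
        exact pf_comb J hJ c d ht0.le ht1 _ _
      rw [hval] at h8
      nlinarith [h6, h8, ht0]
    intro x
    by_cases hxD : x ∈ pD J₀ v β
    · rw [hrepD _ hxD, hrepD _ hzwD, hval, ← EReal.coe_add, EReal.coe_le_coe_iff]
      exact glob x hxD
    · rw [hrepT _ hxD]
      exact le_top

lemma min_iff {w : F} (hwT : w ∈ pT J₀ v β zb) (u : F) :
    (∀ y ∈ pT J₀ v β zb, pM J hJ c d zb w - ⟪lb + u, w⟫ ≤ pM J hJ c d zb y - ⟪lb + u, y⟫)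
      ↔ ((∃ μ ν : ι → ℝ, (∀ i, 0 ≤ μ i) ∧ (∀ k, 0 ≤ ν k) ∧
          (∑ i ∈ pA J hJ c d zb, μ i = 1) ∧
          lb + u = (∑ i ∈ pA J hJ c d zb, μ i • c i) + ∑ k ∈ pA0 J₀ v β zb, ν k • v k) ∧
          pM J hJ c d zb w ≤ ⟪lb + u, w⟫) := by
  constructor
  · intro hmin
    have h0 : pM J hJ c d zb w ≤ ⟪lb + u, w⟫ := by
      have h1 := hmin 0 (pT_zero J₀ v β zb)
      rw [pM_zero, inner_zero_right] at h1
      linarith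
    refine ⟨?_, h0⟩
    have hfar : ∀ y : F, (∀ k ∈ pA0 J₀ v β zb, ⟪v k, y⟫ ≤ 0) →
        ⟪lb + u, y⟫ ≤ (pA J hJ c d zb).sup' (pA_ne J hJ c d zb) fun i => ⟪c i, y⟫ := by
      intro y hyT
      show ⟪lb + u, y⟫ ≤ pM J hJ c d zb y
      by_contra hlt
      push_neg at hlt
      have hqy : pM J hJ c d zb y - ⟪lb + u, y⟫ < 0 := by linarith
      have hqw := hmin y hyT
      set tt := ((pM J hJ c d zb w - ⟪lb + u, w⟫) - 1) /
        (pM J hJ c d zb y - ⟪lb + u, y⟫) with httdef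
      have htt : 0 < tt := div_pos_of_neg_of_neg (by linarith) hqy
      have h2 := hmin (tt • y) (pT_smul J₀ v β zb htt.le hyT)
      rw [pM_smul J hJ c d zb htt.le, real_inner_smul_right] at h2
      have h3 : tt * (pM J hJ c d zb y - ⟪lb + u, y⟫)
          = (pM J hJ c d zb w - ⟪lb + u, w⟫) - 1 := by
        rw [httdef]
        exact div_mul_cancel₀ _ (ne_of_lt hqy)
      nlinarith [h2, h3]
    obtain ⟨μ, ν, hμ0, hν0, hμ1, hrep⟩ :=
      farkas_affine (pA0 J₀ v β zb) v (pA J hJ c d zb) (pA_ne J hJ c d zb) c (lb + u) hfar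
    exact ⟨μ, ν, hμ0, hν0, hμ1, hrep⟩
  · rintro ⟨⟨μ, ν, hμ0, hν0, hμ1, hrep⟩, hMw⟩
    intro y hyT
    have hval : ⟪lb + u, y⟫ = (∑ i ∈ pA J hJ c d zb, μ i * ⟪c i, y⟫)
        + ∑ k ∈ pA0 J₀ v β zb, ν k * ⟪v k, y⟫ := by
      rw [hrep, inner_add_left, sum_inner, sum_inner]
      congr 1 <;> exact Finset.sum_congr rfl fun i _ => real_inner_smul_left _ _ _
    have h1 : (∑ i ∈ pA J hJ c d zb, μ i * ⟪c i, y⟫) ≤ pM J hJ c d zb y := by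
      calc (∑ i ∈ pA J hJ c d zb, μ i * ⟪c i, y⟫)
          ≤ ∑ i ∈ pA J hJ c d zb, μ i * pM J hJ c d zb y :=
            Finset.sum_le_sum fun i hi =>
              mul_le_mul_of_nonneg_left (pM_ge J hJ c d zb hi y) (hμ0 i)
        _ = pM J hJ c d zb y := by rw [← Finset.sum_mul, hμ1, one_mul]
    have h2 : (∑ k ∈ pA0 J₀ v β zb, ν k * ⟪v k, y⟫) ≤ 0 :=
      Finset.sum_nonpos fun k hk => mul_nonpos_iff.mpr (Or.inl ⟨hν0 k, hyT k hk⟩)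
    linarith [hval, h1, h2, hMw]

lemma lb_rep (hge : ∀ w ∈ pT J₀ v β zb, ⟪lb, w⟫ ≤ pM J hJ c d zb w) :
    ∃ μ ν : ι → ℝ, (∀ i, 0 ≤ μ i) ∧ (∀ k, 0 ≤ ν k) ∧ (∑ i ∈ pA J hJ c d zb, μ i = 1) ∧
      lb = (∑ i ∈ pA J hJ c d zb, μ i • c i) + ∑ k ∈ pA0 J₀ v β zb, ν k • v k :=
  farkas_affine (pA0 J₀ v β zb) v (pA J hJ c d zb) (pA_ne J hJ c d zb) c lb
    (fun y hy => hge y hy)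

lemma pK_zero : (0:F) ∈ pK J hJ c d J₀ v β zb lb :=
  ⟨pT_zero J₀ v β zb, fun i _ => by rw [inner_zero_right, inner_zero_right]⟩

lemma pK_smul {t : ℝ} (ht : 0 ≤ t) {w : F} (hw : w ∈ pK J hJ c d J₀ v β zb lb) :
    t • w ∈ pK J hJ c d J₀ v β zb lb :=
  ⟨pT_smul J₀ v β zb ht hw.1, fun i hi => by
    rw [real_inner_smul_right, real_inner_smul_right]
    exact mul_le_mul_of_nonneg_left (hw.2 i hi) ht⟩

lemma pK_closed : IsClosed (pK J hJ c d J₀ v β zb lb) := by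
  have : pK J hJ c d J₀ v β zb lb =
      (⋂ k ∈ pA0 J₀ v β zb, {w : F | ⟪v k, w⟫ ≤ 0}) ∩
      (⋂ i ∈ pA J hJ c d zb, {w : F | ⟪c i, w⟫ ≤ ⟪lb, w⟫}) := by
    ext w
    simp only [pK, pT, Set.mem_setOf_eq, Set.mem_inter_iff, Set.mem_iInter]
  rw [this]
  refine IsClosed.inter ?_ ?_
  · exact isClosed_biInter fun k _ =>
      isClosed_le (continuous_const.inner continuous_id) continuous_const
  · exact isClosed_biInter fun i _ =>
      isClosed_le (continuous_const.inner continuous_id) (continuous_const.inner continuous_id)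

lemma ncone_pK_iff {w : F} (hw : w ∈ pK J hJ c d J₀ v β zb lb) (u : F) :
    u ∈ ncone (pK J hJ c d J₀ v β zb lb) w ↔
      ((∀ y ∈ pK J hJ c d J₀ v β zb lb, ⟪u, y⟫ ≤ 0) ∧ ⟪u, w⟫ = 0) := by
  constructor
  · intro h
    have h0 := h 0 (pK_zero J hJ c d J₀ v β zb lb)
    rw [zero_sub, inner_neg_right] at h0
    have h2 := h ((2:ℝ) • w) (pK_smul J hJ c d J₀ v β zb lb (by norm_num) hw)
    have h2w : (2:ℝ) • w - w = w := by
      rw [two_smul]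
      abel
    rw [h2w] at h2
    have hperp : ⟪u, w⟫ = 0 := le_antisymm h2 (by linarith)
    refine ⟨fun y hy => ?_, hperp⟩
    have h3 := h y hy
    rw [inner_sub_right, hperp] at h3
    linarith
  · rintro ⟨hpol, hperp⟩ y hy
    rw [inner_sub_right, hperp]
    have := hpol y hy
    linarith

end Red


section Faces

open scoped Classical Pointwise

variable {F : Type*} [NormedAddCommGroup F] [InnerProductSpace ℝ F] [FiniteDimensional ℝ F]
variable {ι : Type*} [Fintype ι]

local notation "⟪" x ", " y "⟫" => @inner ℝ _ _ x y

lemma add_closed_of_compact {K C : Set F} (hK : IsCompact K) (hC : IsClosed C) :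
    IsClosed (K + C) := by
  rw [← isSeqClosed_iff_isClosed]
  intro xs x hxs hx
  have hmem : ∀ n, ∃ a ∈ K, ∃ b ∈ C, a + b = xs n := fun n => Set.mem_add.mp (hxs n)
  choose a ha b hb hab using hmem
  obtain ⟨l, hlK, φ, hφmono, hφtend⟩ := hK.tendsto_subseq ha
  have hbtend : Filter.Tendsto (fun n => b (φ n)) atTop (𝓝 (x - l)) := by
    have h1 : (fun n => b (φ n)) = fun n => xs (φ n) - a (φ n) := by
      funext n
      rw [← hab (φ n)]
      abel
    rw [h1]
    exact (hx.comp hφmono.tendsto_atTop).sub hφtend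
  have hxl : x - l ∈ C := hC.mem_of_tendsto hbtend (Filter.Eventually.of_forall fun n => hb _)
  exact Set.mem_add.mpr ⟨l, hlK, x - l, hxl, by abel⟩

/-- The face set attached to supports `B₁, B₂`. -/
def faceSet (c v : ι → F) (lb : F) (B₁ B₂ : Finset ι) : Set F :=
  {x | ∃ μ ν : ι → ℝ, (∀ i, 0 ≤ μ i) ∧ (∀ k, 0 ≤ ν k) ∧ (∑ i ∈ B₁, μ i = 1) ∧
    x = (∑ i ∈ B₁, μ i • (c i - lb)) + ∑ k ∈ B₂, ν k • v k}

lemma SSet_closed (c v : ι → F) (lb : F) (B₁ B₂ : Finset ι) :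
    IsClosed (faceSet c v lb B₁ B₂) := by
  classical
  set Δ : Set (ι → ℝ) := {μ | (∀ i, 0 ≤ μ i ∧ μ i ≤ 1) ∧ (∀ i, i ∉ B₁ → μ i = 0) ∧
    ∑ i ∈ B₁, μ i = 1} with hΔ
  set Φ : (ι → ℝ) → F := fun μ => ∑ i ∈ B₁, μ i • (c i - lb) with hΦ
  have hsplit : faceSet c v lb B₁ B₂ = (Φ '' Δ) + coneOf B₂ v := by
    ext x
    constructor
    · rintro ⟨μ, ν, hμ0, hν0, hμ1, rfl⟩
      set μm : ι → ℝ := fun i => if i ∈ B₁ then μ i else 0 with hμm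
      have hsame : ∑ i ∈ B₁, μm i • (c i - lb) = ∑ i ∈ B₁, μ i • (c i - lb) :=
        Finset.sum_congr rfl fun i hi => by simp [hμm, hi]
      have hsum : ∑ i ∈ B₁, μm i = 1 := by
        rw [← hμ1]
        exact Finset.sum_congr rfl fun i hi => by simp [hμm, hi]
      refine Set.mem_add.mpr ⟨Φ μm, ⟨μm, ⟨?_, ?_, hsum⟩, rfl⟩, ∑ k ∈ B₂, ν k • v k,
        ⟨ν, hν0, rfl⟩, ?_⟩
      · intro i
        by_cases hi : i ∈ B₁
        · simp only [hμm, if_pos hi]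
          exact ⟨hμ0 i, by
            rw [← hsum]
            have : μm i = μ i := by simp [hμm, hi]
            exact this ▸ (Finset.single_le_sum (fun j _ => by
              by_cases hj : j ∈ B₁ <;> simp [hμm, hj, hμ0 j]) hi)⟩
        · simp [hμm, hi]
      · intro i hi
        simp [hμm, hi]
      · rw [hΦ]
        simp only
        rw [hsame]
    · intro hx
      obtain ⟨y, ⟨μ, hμΔ, rfl⟩, z, ⟨ν, hν0, rfl⟩, rfl⟩ := Set.mem_add.mp hx
      exact ⟨μ, ν, fun i => (hμΔ.1 i).1, hν0, hμΔ.2.2, rfl⟩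
  rw [hsplit]
  refine add_closed_of_compact ?_ (coneOf_closed B₂ v)
  refine IsCompact.image ?_ ?_
  · have hclosed : IsClosed Δ := by
      have hΔeq : Δ = (⋂ i, {μ : ι → ℝ | 0 ≤ μ i ∧ μ i ≤ 1}) ∩
          ((⋂ i, ⋂ (_ : i ∉ B₁), {μ : ι → ℝ | μ i = 0}) ∩
            {μ : ι → ℝ | ∑ i ∈ B₁, μ i = 1}) := by
        ext μ
        simp only [hΔ, Set.mem_setOf_eq, Set.mem_inter_iff, Set.mem_iInter]
      rw [hΔeq]
      refine IsClosed.inter (isClosed_iInter fun i => IsClosed.inter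
        (isClosed_le continuous_const (continuous_apply i))
        (isClosed_le (continuous_apply i) continuous_const))
        (IsClosed.inter (isClosed_iInter fun i => isClosed_iInter fun _ =>
          isClosed_eq (continuous_apply i) continuous_const)
          (isClosed_eq (continuous_finset_sum _ fun i _ => continuous_apply i)
            continuous_const))
    have hbdd : Bornology.IsBounded Δ := by
      refine Metric.isBounded_closedBall (x := (0 : ι → ℝ)) (r := 1) |>.subset ?_
      intro μ hμ
      rw [Metric.mem_closedBall, dist_zero_right]
      refine pi_norm_le_iff_of_nonneg zero_le_one |>.mpr fun i => ?_
      rw [Real.norm_eq_abs, abs_le]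
      exact ⟨by linarith [(hμ.1 i).1], (hμ.1 i).2⟩
    exact isCompact_of_isClosed_isBounded hclosed hbdd
  · exact (continuous_finset_sum _ fun i _ => (continuous_apply i).smul continuous_const)

lemma eps2_exists (c v : ι → F) (lb : F) :
    ∃ ε₂ : ℝ, 0 < ε₂ ∧ ∀ B₁ B₂ : Finset ι, (0:F) ∉ faceSet c v lb B₁ B₂ →
      ∀ x ∈ faceSet c v lb B₁ B₂, ε₂ ≤ ‖x‖ := by
  classical
  set eb : Finset ι × Finset ι → ℝ := fun pr =>
    if h : (0:F) ∉ faceSet c v lb pr.1 pr.2 ∧ (faceSet c v lb pr.1 pr.2).Nonempty then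
      Metric.infDist 0 (faceSet c v lb pr.1 pr.2) else 1 with hebdef
  have hebpos : ∀ pr, 0 < eb pr := by
    intro pr
    by_cases h : (0:F) ∉ faceSet c v lb pr.1 pr.2 ∧ (faceSet c v lb pr.1 pr.2).Nonempty
    · have he : eb pr = Metric.infDist 0 (faceSet c v lb pr.1 pr.2) := by
        simp only [hebdef]
        rw [dif_pos h]
      rw [he]
      exact (IsClosed.notMem_iff_infDist_pos (SSet_closed c v lb pr.1 pr.2) h.2).mp h.1
    · have he : eb pr = 1 := by
        simp only [hebdef]
        rw [dif_neg h]
      rw [he]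
      exact one_pos
  set cand := insert (1:ℝ) (Finset.univ.image eb) with hcand
  have hcne : cand.Nonempty := ⟨1, Finset.mem_insert_self _ _⟩
  refine ⟨cand.min' hcne, ?_, ?_⟩
  · rw [Finset.lt_min'_iff]
    intro y hy
    rcases Finset.mem_insert.mp hy with h | h
    · rw [h]; exact one_pos
    · obtain ⟨pr, _, rfl⟩ := Finset.mem_image.mp h
      exact hebpos pr
  · intro B₁ B₂ h0 x hx
    have hne : (faceSet c v lb B₁ B₂).Nonempty := ⟨x, hx⟩
    have h1 : eb (B₁, B₂) = Metric.infDist 0 (faceSet c v lb B₁ B₂) := by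
      simp only [hebdef]
      rw [dif_pos ⟨h0, hne⟩]
    have h2 : cand.min' hcne ≤ eb (B₁, B₂) :=
      Finset.min'_le _ _
        (Finset.mem_insert_of_mem (Finset.mem_image_of_mem eb (Finset.mem_univ _)))
    have h3 : Metric.infDist 0 (faceSet c v lb B₁ B₂) ≤ dist 0 x :=
      Metric.infDist_le_dist_of_mem hx
    rw [dist_zero_left] at h3
    rw [h1] at h2
    linarith

end Faces


section Reduction

open scoped Classical

variable {F : Type*} [NormedAddCommGroup F] [InnerProductSpace ℝ F] [FiniteDimensional ℝ F]
variable {ι : Type*} [Fintype ι]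

local notation "⟪" x ", " y "⟫" => @inner ℝ _ _ x y

variable (J : Finset ι) (hJ : J.Nonempty) (c : ι → F) (d : ι → ℝ) (J₀ : Finset ι) (v : ι → F)
  (β : ι → ℝ) (zb lb : F) (g : F → EReal)

/-- The reduction lemma: near `(zb, lb)`, the graph of `subdiff g` coincides with the
graph of the normal cone mapping of the critical cone. -/
lemma reduction (hrepD : ∀ x ∈ pD J₀ v β, g x = ((pf J hJ c d x : ℝ) : EReal))
    (hrepT : ∀ x ∉ pD J₀ v β, g x = ⊤)
    (hzbD : zb ∈ pD J₀ v β) {δ : ℝ} (hδ0 : 0 < δ)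
    (hδ : ∀ y : F, ‖y‖ < δ → ((zb + y ∈ pD J₀ v β ↔ y ∈ pT J₀ v β zb) ∧
        pf J hJ c d (zb + y) = pf J hJ c d zb + pM J hJ c d zb y))
    (hl : lb ∈ subdiff g zb) :
    ∃ ε : ℝ, 0 < ε ∧ ∀ w u : F, ‖w‖ < ε → ‖u‖ < ε →
      ((lb + u) ∈ subdiff g (zb + w) ↔
        (w ∈ pK J hJ c d J₀ v β zb lb ∧ u ∈ ncone (pK J hJ c d J₀ v β zb lb) w)) := by
  classical
  have hge := hge_lemma J hJ c d J₀ v β zb lb g hrepD hzbD hδ0 hδ hl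
  obtain ⟨μ₀, ν₀, hμ₀0, hν₀0, hμ₀1, hlb⟩ := lb_rep J hJ c d J₀ v β zb lb hge
  set SG : ι ⊕ ι → F := Sum.elim v (fun i => c i - lb) with hSG
  set Sfin : Finset (ι ⊕ ι) := (pA0 J₀ v β zb).disjSum (pA J hJ c d zb) with hSfin
  obtain ⟨Mc, hMc, hMcspec⟩ := coneOf_bound Sfin SG
  obtain ⟨ε₂, hε₂, hε₂spec⟩ := eps2_exists c v lb
  set Acard := (pA J hJ c d zb).card with hAcard
  set ε := min (min (1 / ((Acard : ℝ) * Mc + 1)) ε₂) (δ/2) with hεdef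
  have hACMc : 0 ≤ (Acard : ℝ) * Mc := mul_nonneg (Nat.cast_nonneg _) hMc.le
  have hε : 0 < ε := lt_min (lt_min (by positivity) hε₂) (by linarith)
  refine ⟨ε, hε, fun w u hwε huε => ?_⟩
  have hwδ2 : ‖w‖ < δ/2 := lt_of_lt_of_le hwε (min_le_right _ _)
  rw [sub_iff J hJ c d J₀ v β zb lb g hrepD hrepT hzbD hδ0 hδ hwδ2 u]
  constructor
  · rintro ⟨hwT, hmin⟩
    obtain ⟨⟨μ, ν, hμ0, hν0, hμ1, hrep⟩, hMw⟩ :=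
      (min_iff J hJ c d J₀ v β zb lb hwT u).mp hmin
    have hurep : u = (∑ i ∈ pA J hJ c d zb, μ i • (c i - lb))
        + ∑ k ∈ pA0 J₀ v β zb, ν k • v k := by
      have h1 : ∑ i ∈ pA J hJ c d zb, μ i • (c i - lb)
          = (∑ i ∈ pA J hJ c d zb, μ i • c i) - (∑ i ∈ pA J hJ c d zb, μ i) • lb := by
        rw [Finset.sum_smul, ← Finset.sum_sub_distrib]
        exact Finset.sum_congr rfl fun i _ => smul_sub _ _ _
      have h2 : u = ((∑ i ∈ pA J hJ c d zb, μ i • c i)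
          + ∑ k ∈ pA0 J₀ v β zb, ν k • v k) - lb := by
        rw [← hrep]
        abel
      rw [h1, hμ1, one_smul, h2]
      abel
    set hq : ℝ := pM J hJ c d zb w - ⟪lb, w⟫ with hhq
    have hh0 : 0 ≤ hq := by
      have := hge w hwT
      rw [hhq]
      linarith
    have hcw : ∀ i ∈ pA J hJ c d zb, ⟪c i - lb, w⟫ ≤ hq := by
      intro i hi
      rw [inner_sub_left, hhq]
      have := pM_ge J hJ c d zb hi w
      linarith
    have hvw : ∀ k ∈ pA0 J₀ v β zb, ⟪v k, w⟫ ≤ 0 := fun k hk => hwT k hk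
    have huw : ⟪u, w⟫ = (∑ i ∈ pA J hJ c d zb, μ i * ⟪c i - lb, w⟫)
        + ∑ k ∈ pA0 J₀ v β zb, ν k * ⟪v k, w⟫ := by
      rw [hurep, inner_add_left, sum_inner, sum_inner]
      congr 1 <;> exact Finset.sum_congr rfl fun i _ => real_inner_smul_left _ _ _
    have hle : ⟪u, w⟫ ≤ hq := by
      have h1 : (∑ i ∈ pA J hJ c d zb, μ i * ⟪c i - lb, w⟫)
          ≤ ∑ i ∈ pA J hJ c d zb, μ i * hq :=
        Finset.sum_le_sum fun i hi => mul_le_mul_of_nonneg_left (hcw i hi) (hμ0 i)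
      have h1' : (∑ i ∈ pA J hJ c d zb, μ i * hq) = hq := by
        rw [← Finset.sum_mul, hμ1, one_mul]
      have h2 : (∑ k ∈ pA0 J₀ v β zb, ν k * ⟪v k, w⟫) ≤ 0 :=
        Finset.sum_nonpos fun k hk => mul_nonpos_iff.mpr (Or.inl ⟨hν0 k, hvw k hk⟩)
      rw [huw]
      linarith
    have hge2 : hq ≤ ⟪u, w⟫ := by
      have h3 : ⟪lb + u, w⟫ = ⟪lb, w⟫ + ⟪u, w⟫ := inner_add_left _ _ _
      rw [hhq]
      linarith [hMw]
    have heq : ⟪u, w⟫ = hq := le_antisymm hle hge2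
    have hX : 0 ≤ ∑ i ∈ pA J hJ c d zb, μ i * (hq - ⟪c i - lb, w⟫) :=
      Finset.sum_nonneg fun i hi => mul_nonneg (hμ0 i) (by linarith [hcw i hi])
    have hY : 0 ≤ ∑ k ∈ pA0 J₀ v β zb, ν k * (-⟪v k, w⟫) :=
      Finset.sum_nonneg fun k hk => mul_nonneg (hν0 k) (by linarith [hvw k hk])
    have hXY : (∑ i ∈ pA J hJ c d zb, μ i * (hq - ⟪c i - lb, w⟫))
        + (∑ k ∈ pA0 J₀ v β zb, ν k * (-⟪v k, w⟫)) = 0 := by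
      have c1 : ∀ i ∈ pA J hJ c d zb,
          μ i * (hq - ⟪c i - lb, w⟫) = μ i * hq - μ i * ⟪c i - lb, w⟫ :=
        fun i _ => mul_sub _ _ _
      have c2 : ∀ k ∈ pA0 J₀ v β zb, ν k * (-⟪v k, w⟫) = -(ν k * ⟪v k, w⟫) :=
        fun k _ => mul_neg _ _
      have e1 : ∑ i ∈ pA J hJ c d zb, μ i * (hq - ⟪c i - lb, w⟫)
          = hq - ∑ i ∈ pA J hJ c d zb, μ i * ⟪c i - lb, w⟫ := by
        rw [Finset.sum_congr rfl c1, Finset.sum_sub_distrib, ← Finset.sum_mul, hμ1, one_mul]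
      have e2 : ∑ k ∈ pA0 J₀ v β zb, ν k * (-⟪v k, w⟫)
          = - ∑ k ∈ pA0 J₀ v β zb, ν k * ⟪v k, w⟫ := by
        rw [Finset.sum_congr rfl c2, Finset.sum_neg_distrib]
      rw [e1, e2]
      rw [huw] at heq
      linarith [heq]
    have hXzero : ∑ i ∈ pA J hJ c d zb, μ i * (hq - ⟪c i - lb, w⟫) = 0 := by linarith
    have hYzero : ∑ k ∈ pA0 J₀ v β zb, ν k * (-⟪v k, w⟫) = 0 := by linarith
    have hterm1 : ∀ i ∈ pA J hJ c d zb, μ i * (hq - ⟪c i - lb, w⟫) = 0 :=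
      (Finset.sum_eq_zero_iff_of_nonneg fun i hi =>
        mul_nonneg (hμ0 i) (by linarith [hcw i hi])).mp hXzero
    have hterm2 : ∀ k ∈ pA0 J₀ v β zb, ν k * (-⟪v k, w⟫) = 0 :=
      (Finset.sum_eq_zero_iff_of_nonneg fun k hk =>
        mul_nonneg (hν0 k) (by linarith [hvw k hk])).mp hYzero
    by_cases hcase : hq ≤ 0
    · have hh00 : hq = 0 := le_antisymm hcase hh0
      have hwK : w ∈ pK J hJ c d J₀ v β zb lb := by
        refine ⟨hwT, fun i hi => ?_⟩
        have h4 := hcw i hi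
        rw [inner_sub_left] at h4
        linarith [hh00]
      refine ⟨hwK, ?_⟩
      rw [ncone_pK_iff J hJ c d J₀ v β zb lb hwK u]
      refine ⟨?_, by rw [heq, hh00]⟩
      intro y hy
      have hyrep : ⟪u, y⟫ = (∑ i ∈ pA J hJ c d zb, μ i * ⟪c i - lb, y⟫)
          + ∑ k ∈ pA0 J₀ v β zb, ν k * ⟪v k, y⟫ := by
        rw [hurep, inner_add_left, sum_inner, sum_inner]
        congr 1 <;> exact Finset.sum_congr rfl fun i _ => real_inner_smul_left _ _ _
      have hy1 : (∑ i ∈ pA J hJ c d zb, μ i * ⟪c i - lb, y⟫) ≤ 0 :=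
        Finset.sum_nonpos fun i hi => mul_nonpos_iff.mpr (Or.inl ⟨hμ0 i, by
          rw [inner_sub_left]
          linarith [hy.2 i hi]⟩)
      have hy2 : (∑ k ∈ pA0 J₀ v β zb, ν k * ⟪v k, y⟫) ≤ 0 :=
        Finset.sum_nonpos fun k hk => mul_nonpos_iff.mpr (Or.inl ⟨hν0 k, hy.1 k hk⟩)
      rw [hyrep]
      linarith
    · exfalso
      push_neg at hcase
      set B₁ := (pA J hJ c d zb).filter (fun i => μ i ≠ 0) with hB₁
      set B₂ := (pA0 J₀ v β zb).filter (fun k => ν k ≠ 0) with hB₂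
      have hB₁eq : ∀ i ∈ B₁, ⟪c i - lb, w⟫ = hq := by
        intro i hi
        obtain ⟨hiA, hμne⟩ := Finset.mem_filter.mp hi
        rcases mul_eq_zero.mp (hterm1 i hiA) with h' | h'
        · exact absurd h' hμne
        · linarith
      have hB₂eq : ∀ k ∈ B₂, ⟪v k, w⟫ = 0 := by
        intro k hk
        obtain ⟨hkA, hνne⟩ := Finset.mem_filter.mp hk
        rcases mul_eq_zero.mp (hterm2 k hkA) with h' | h'
        · exact absurd h' hνne
        · linarith
      have husS : u ∈ faceSet c v lb B₁ B₂ := by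
        refine ⟨μ, ν, hμ0, hν0, ?_, ?_⟩
        · rw [hB₁, Finset.sum_filter_ne_zero]
          exact hμ1
        · have hf1 : ∀ i ∈ pA J hJ c d zb, μ i • (c i - lb) ≠ 0 → μ i ≠ 0 := by
            intro i _ hfne hμz
            exact hfne (by rw [hμz, zero_smul])
          have hf2 : ∀ k ∈ pA0 J₀ v β zb, ν k • v k ≠ 0 → ν k ≠ 0 := by
            intro k _ hfne hνz
            exact hfne (by rw [hνz, zero_smul])
          rw [hurep, hB₁, hB₂]
          congr 1
          · exact (Finset.sum_filter_of_ne hf1).symm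
          · exact (Finset.sum_filter_of_ne hf2).symm
      have h0S : (0:F) ∉ faceSet c v lb B₁ B₂ := by
        rintro ⟨μ', ν', hμ'0, hν'0, hμ'1, h0⟩
        have h5 := congrArg (fun z : F => ⟪z, w⟫) h0
        simp only [inner_zero_left] at h5
        rw [inner_add_left, sum_inner, sum_inner] at h5
        have e3 : ∑ i ∈ B₁, ⟪μ' i • (c i - lb), w⟫ = ∑ i ∈ B₁, μ' i * hq := by
          refine Finset.sum_congr rfl fun i hi => ?_
          rw [real_inner_smul_left, hB₁eq i hi]
        have e4 : ∑ k ∈ B₂, ⟪ν' k • v k, w⟫ = 0 := by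
          refine Finset.sum_eq_zero fun k hk => ?_
          rw [real_inner_smul_left, hB₂eq k hk, mul_zero]
        rw [e3, e4, ← Finset.sum_mul, hμ'1, one_mul] at h5
        linarith
      have hbnd := hε₂spec B₁ B₂ h0S u husS
      have huε₂ : ‖u‖ < ε₂ :=
        lt_of_lt_of_le huε (le_trans (min_le_left _ _) (min_le_right _ _))
      linarith
  · rintro ⟨hwK, hun⟩
    obtain ⟨hpol, hperp⟩ := (ncone_pK_iff J hJ c d J₀ v β zb lb hwK u).mp hun
    have hucone : u ∈ coneOf Sfin SG := by
      apply farkas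
      intro y hy
      have hyK : y ∈ pK J hJ c d J₀ v β zb lb := by
        constructor
        · intro k hk
          exact hy (Sum.inl k) (by rw [hSfin]; exact Finset.inl_mem_disjSum.mpr hk)
        · intro i hi
          have h2 : ⟪c i - lb, y⟫ ≤ 0 :=
            hy (Sum.inr i) (by rw [hSfin]; exact Finset.inr_mem_disjSum.mpr hi)
          rw [inner_sub_left] at h2
          linarith
      exact hpol y hyK
    obtain ⟨t, ht0, htrep, htbd⟩ := hMcspec u hucone
    rw [hSfin, Finset.sum_disjSum] at htrep
    set σ : ℝ := ∑ i ∈ pA J hJ c d zb, t (Sum.inr i) with hσ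
    have hσ0 : 0 ≤ σ := Finset.sum_nonneg fun i _ => ht0 _
    have hσle : σ ≤ (Acard : ℝ) * (Mc * ‖u‖) := by
      calc σ ≤ ∑ _i ∈ pA J hJ c d zb, Mc * ‖u‖ :=
            Finset.sum_le_sum fun i _ => htbd _
        _ = (Acard : ℝ) * (Mc * ‖u‖) := by
            rw [Finset.sum_const, nsmul_eq_mul, hAcard]
    have hσ1 : σ ≤ 1 := by
      have huε₁ : ‖u‖ < 1 / ((Acard : ℝ) * Mc + 1) :=
        lt_of_lt_of_le huε (le_trans (min_le_left _ _) (min_le_left _ _))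
      have h2 : ‖u‖ * ((Acard : ℝ) * Mc + 1) < 1 :=
        (lt_div_iff₀ (by positivity)).mp huε₁
      nlinarith [norm_nonneg u, hσle]
    set μt : ι → ℝ := fun i => t (Sum.inr i) + (1 - σ) * μ₀ i with hμt
    set νt : ι → ℝ := fun k => t (Sum.inl k) + (1 - σ) * ν₀ k with hνt
    have hrepl : lb + u = (∑ i ∈ pA J hJ c d zb, μt i • c i)
        + ∑ k ∈ pA0 J₀ v β zb, νt k • v k := by
      have e1 : ∑ i ∈ pA J hJ c d zb, μt i • c i
          = ∑ i ∈ pA J hJ c d zb, t (Sum.inr i) • c i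
            + (1 - σ) • ∑ i ∈ pA J hJ c d zb, μ₀ i • c i := by
        rw [Finset.smul_sum, ← Finset.sum_add_distrib]
        refine Finset.sum_congr rfl fun i _ => ?_
        simp only [hμt]
        rw [add_smul, smul_smul]
      have e2 : ∑ k ∈ pA0 J₀ v β zb, νt k • v k
          = ∑ k ∈ pA0 J₀ v β zb, t (Sum.inl k) • v k
            + (1 - σ) • ∑ k ∈ pA0 J₀ v β zb, ν₀ k • v k := by
        rw [Finset.smul_sum, ← Finset.sum_add_distrib]
        refine Finset.sum_congr rfl fun k _ => ?_
        simp only [hνt]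
        rw [add_smul, smul_smul]
      have e3 : ∑ i ∈ pA J hJ c d zb, t (Sum.inr i) • (c i - lb)
          = ∑ i ∈ pA J hJ c d zb, t (Sum.inr i) • c i - σ • lb := by
        rw [hσ, Finset.sum_smul, ← Finset.sum_sub_distrib]
        exact Finset.sum_congr rfl fun i _ => smul_sub _ _ _
      have htrep' : u = (∑ k ∈ pA0 J₀ v β zb, t (Sum.inl k) • v k)
          + ∑ i ∈ pA J hJ c d zb, t (Sum.inr i) • (c i - lb) := htrep
      rw [e1, e2, htrep', e3]
      rw [sub_smul, sub_smul, one_smul, one_smul, hlb, smul_add]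
      abel
    have hMw : pM J hJ c d zb w ≤ ⟪lb + u, w⟫ := by
      have h1 : pM J hJ c d zb w ≤ ⟪lb, w⟫ := pM_le J hJ c d zb fun i hi => hwK.2 i hi
      rw [inner_add_left, hperp, add_zero]
      exact h1
    refine ⟨hwK.1, (min_iff J hJ c d J₀ v β zb lb hwK.1 u).mpr ⟨⟨μt, νt, ?_, ?_, ?_, hrepl⟩, hMw⟩⟩
    · intro i
      simp only [hμt]
      exact add_nonneg (ht0 _) (mul_nonneg (by linarith) (hμ₀0 i))
    · intro k
      simp only [hνt]
      exact add_nonneg (ht0 _) (mul_nonneg (by linarith) (hν₀0 k))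
    · simp only [hμt]
      rw [Finset.sum_add_distrib, ← Finset.mul_sum, hμ₀1, mul_one, ← hσ]
      ring

end Reduction


local notation "⟪" x ", " y "⟫" => @inner ℝ _ _ x y

/-- the tangent cone to `gph ∂g` at `(zb,lb)` is the graph of the
normal cone mapping of the critical cone (graphical derivative formula). -/
theorem stmt10 {m : ℕ} (g : EuclideanSpace ℝ (Fin m) → EReal) (hg : IsPolyhedralFn g)
    (zb lb : EuclideanSpace ℝ (Fin m)) (hl : lb ∈ subdiff g zb) :
    btcone {p : EuclideanSpace ℝ (Fin m) × EuclideanSpace ℝ (Fin m) | p.2 ∈ subdiff g p.1}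
        (zb, lb) =
      {p : EuclideanSpace ℝ (Fin m) × EuclideanSpace ℝ (Fin m) |
        p.1 ∈ Kcone g zb lb ∧ p.2 ∈ ncone (Kcone g zb lb) p.1} := by
  classical
  obtain ⟨n, J, J₀, hJ, c, v, d, β, hrepD', hrepT'⟩ := exists_representation g hg
  have hrepD : ∀ x ∈ pD J₀ v β, g x = ((pf J hJ c d x : ℝ) : EReal) := fun x hx => hrepD' x hx
  have hrepT : ∀ x ∉ pD J₀ v β, g x = ⊤ := fun x hx => hrepT' x hx
  obtain ⟨z₀, hz₀⟩ := hg.1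
  have hzbD : zb ∈ pD J₀ v β := zb_mem_pD J₀ v β zb lb g hrepT z₀ hz₀ hl
  obtain ⟨δ, hδ0, hδ⟩ := loc_struct J hJ c d J₀ v β zb hzbD
  have hKeq : Kcone g zb lb = pK J hJ c d J₀ v β zb lb :=
    Kcone_eq J hJ c d J₀ v β zb lb g hrepD hrepT hzbD hδ0 hδ hl
  obtain ⟨ε, hε, hred⟩ := reduction J hJ c d J₀ v β zb lb g hrepD hrepT hzbD hδ0 hδ hl
  rw [hKeq]
  set K := pK J hJ c d J₀ v β zb lb with hK
  set S : Set (EuclideanSpace ℝ (Fin m) × EuclideanSpace ℝ (Fin m)) :=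
    {p | p.1 ∈ K ∧ p.2 ∈ ncone K p.1} with hS
  have hloc : ∀ p : EuclideanSpace ℝ (Fin m) × EuclideanSpace ℝ (Fin m),
      dist p (zb, lb) < ε →
      (p ∈ {p : EuclideanSpace ℝ (Fin m) × EuclideanSpace ℝ (Fin m) | p.2 ∈ subdiff g p.1}
        ↔ p ∈ {p : EuclideanSpace ℝ (Fin m) × EuclideanSpace ℝ (Fin m) |
            (p.1 - zb, p.2 - lb) ∈ S}) := by
    intro p hp
    rw [Prod.dist_eq, sup_lt_iff] at hp
    have hw : ‖p.1 - zb‖ < ε := by rw [← dist_eq_norm]; exact hp.1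
    have hu : ‖p.2 - lb‖ < ε := by rw [← dist_eq_norm]; exact hp.2
    have hiff := hred (p.1 - zb) (p.2 - lb) hw hu
    have e1 : zb + (p.1 - zb) = p.1 := by abel
    have e2 : lb + (p.2 - lb) = p.2 := by abel
    rw [e1, e2] at hiff
    exact hiff
  have h1 := btcone_congr_local hε hloc
  rw [h1, btcone_shift]
  have h2 : {q : EuclideanSpace ℝ (Fin m) × EuclideanSpace ℝ (Fin m) |
      (zb, lb) + q ∈ {p : EuclideanSpace ℝ (Fin m) × EuclideanSpace ℝ (Fin m) |
        (p.1 - zb, p.2 - lb) ∈ S}} = S := by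
    ext q
    have e1 : ((zb, lb) + q).1 - zb = q.1 := by
      show zb + q.1 - zb = q.1
      abel
    have e2 : ((zb, lb) + q).2 - lb = q.2 := by
      show lb + q.2 - lb = q.2
      abel
    show (((zb, lb) + q).1 - zb, ((zb, lb) + q).2 - lb) ∈ S ↔ q ∈ S
    rw [e1, e2]
  rw [h2]
  apply btcone_closed_cone
  · have hSeq : S = ({p : EuclideanSpace ℝ (Fin m) × EuclideanSpace ℝ (Fin m) | p.1 ∈ K}) ∩
        ⋂ (y : EuclideanSpace ℝ (Fin m)) (_ : y ∈ K),
          {p : EuclideanSpace ℝ (Fin m) × EuclideanSpace ℝ (Fin m) | ⟪p.2, y - p.1⟫ ≤ 0} := by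
      ext p
      simp only [hS, Set.mem_setOf_eq, Set.mem_inter_iff, Set.mem_iInter]
      rfl
    rw [hSeq]
    refine IsClosed.inter ?_ (isClosed_iInter fun y => isClosed_iInter fun _ =>
      isClosed_le (Continuous.inner continuous_snd (continuous_const.sub continuous_fst))
        continuous_const)
    exact IsClosed.preimage continuous_fst (hK ▸ pK_closed J hJ c d J₀ v β zb lb)
  · rintro p ⟨hp1, hp2⟩ t ht
    constructor
    · show t • p.1 ∈ K
      exact pK_smul J hJ c d J₀ v β zb lb ht.le hp1
    · intro y hy
      have hyt : t⁻¹ • y ∈ K :=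
        pK_smul J hJ c d J₀ v β zb lb (inv_nonneg.mpr ht.le) hy
      have h1 := hp2 (t⁻¹ • y) hyt
      show ⟪(t • p).2, y - (t • p).1⟫ ≤ 0
      have h2 : ⟪(t • p).2, y - (t • p).1⟫ = t * (⟪p.2, y⟫ - t * ⟪p.2, p.1⟫) := by
        show ⟪t • p.2, y - t • p.1⟫ = _
        rw [real_inner_smul_left, inner_sub_right, real_inner_smul_right]
      rw [inner_sub_right, real_inner_smul_right] at h1
      have h5 : t * (t⁻¹ * ⟪p.2, y⟫ - ⟪p.2, p.1⟫) = ⟪p.2, y⟫ - t * ⟪p.2, p.1⟫ := by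
        field_simp
      have h4 : t * (t⁻¹ * ⟪p.2, y⟫ - ⟪p.2, p.1⟫) ≤ 0 :=
        mul_nonpos_iff.mpr (Or.inl ⟨ht.le, h1⟩)
      rw [h2]
      calc t * (⟪p.2, y⟫ - t * ⟪p.2, p.1⟫)
          = t * (t * (t⁻¹ * ⟪p.2, y⟫ - ⟪p.2, p.1⟫)) := by rw [h5]
        _ ≤ 0 := mul_nonpos_iff.mpr (Or.inl ⟨ht.le, h4⟩)
end
end
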